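/- arXiv:0708.2997 — 3 statements merged into one kernel-verified Lean document; each statement's English description precedes it below -/
import Mathlib

section
/- Under the hypotheses of the frustum volume lemma (affine functional φ taking value -1 on p vertices and +1 on q = n-p+1 vertices of an n-simplex Δ), the ratio r_{p,q} = vol({v ∈ Δ : φ(v) ≤ 0}) / vol(Δ) equals 2^{-q} · ∑_{k=0}^{p-1} C(q-1+k, k) · 2^{-k}. -/
open MeasureTheory Finset Pointwise

lemma measSet (m : ℕ) (Q : Finset (Fin m)) (t c : ℝ) :
    MeasurableSet {x : Fin m → ℝ | (∀ i, 0 ≤ x i) ∧ (∑ i ∈ Q, x i ≤ t) ∧ ∑ i, x i ≤ c} := by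
  have h1 : MeasurableSet {x : Fin m → ℝ | ∀ i, 0 ≤ x i} := by
    have : {x : Fin m → ℝ | ∀ i, 0 ≤ x i} = ⋂ i, {x | 0 ≤ x i} := by ext x; simp
    rw [this]
    exact MeasurableSet.iInter fun i => measurableSet_le measurable_const (measurable_pi_apply i)
  have h2 : ∀ (R : Finset (Fin m)) (r : ℝ), MeasurableSet {x : Fin m → ℝ | ∑ i ∈ R, x i ≤ r} :=
    fun R r => measurableSet_le (Finset.measurable_sum R fun i _ => measurable_pi_apply i)
      measurable_const
  exact (h1.inter ((h2 Q t).inter (h2 univ c)) : _)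

lemma measSet' (m : ℕ) (c : ℝ) :
    MeasurableSet {x : Fin m → ℝ | (∀ i, 0 ≤ x i) ∧ ∑ i, x i ≤ c} := by
  have := measSet m ∅ 1 c
  simpa using this

lemma slice_volume {n : ℕ} (i₀ : Fin (n+1)) (S : Set (Fin (n+1) → ℝ))
    (hS : MeasurableSet S) :
    volume S = ∫⁻ s : ℝ, volume {y : Fin n → ℝ | i₀.insertNth s y ∈ S} := by
  have h := (volume_preserving_piFinSuccAbove (fun _ : Fin (n+1) => ℝ) i₀).symm
  rw [← h.measure_preimage hS.nullMeasurableSet, Measure.volume_eq_prod,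
    Measure.prod_apply (((MeasurableEquiv.piFinSuccAbove (fun _ => ℝ) i₀).symm).measurable hS)]
  rfl

lemma volume_corner_simplex : ∀ (n : ℕ) (c : ℝ), 0 ≤ c →
    volume {x : Fin n → ℝ | (∀ i, 0 ≤ x i) ∧ ∑ i, x i ≤ c}
      = ENNReal.ofReal (c ^ n / n.factorial) := by
  intro n
  induction n with
  | zero =>
    intro c hc
    have : {x : Fin 0 → ℝ | (∀ i, 0 ≤ x i) ∧ ∑ i, x i ≤ c} = Set.univ := by
      ext x; simp [hc]
    rw [this, volume_pi, Measure.pi_univ]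
    simp
  | succ n ih =>
    intro c hc
    rw [slice_volume 0 _ (measSet' (n+1) c)]
    have key : ∀ s : ℝ, volume {y : Fin n → ℝ | (0 : Fin (n+1)).insertNth s y ∈
          {x : Fin (n+1) → ℝ | (∀ i, 0 ≤ x i) ∧ ∑ i, x i ≤ c}}
        = Set.indicator (Set.Icc 0 c) (fun s => ENNReal.ofReal ((c - s) ^ n / n.factorial)) s := by
      intro s
      have hmem : ∀ y : Fin n → ℝ, ((0 : Fin (n+1)).insertNth s y ∈
          {x : Fin (n+1) → ℝ | (∀ i, 0 ≤ x i) ∧ ∑ i, x i ≤ c})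
          ↔ ((0 ≤ s ∧ ∀ j, 0 ≤ y j) ∧ s + ∑ j, y j ≤ c) := by
        intro y
        rw [Set.mem_setOf_eq, Fin.forall_iff_succAbove (0 : Fin (n+1)),
          Fin.sum_univ_succAbove _ (0 : Fin (n+1))]
        simp
      by_cases hs : s ∈ Set.Icc 0 c
      · rw [Set.indicator_of_mem hs]
        have : {y : Fin n → ℝ | (0 : Fin (n+1)).insertNth s y ∈
              {x : Fin (n+1) → ℝ | (∀ i, 0 ≤ x i) ∧ ∑ i, x i ≤ c}}
            = {y : Fin n → ℝ | (∀ j, 0 ≤ y j) ∧ ∑ j, y j ≤ c - s} := by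
          ext y; rw [Set.mem_setOf_eq, hmem y]
          constructor
          · rintro ⟨⟨_, h2⟩, h3⟩; exact ⟨h2, by linarith⟩
          · rintro ⟨h2, h3⟩; exact ⟨⟨hs.1, h2⟩, by linarith⟩
        rw [this, ih (c - s) (by linarith [hs.2])]
      · rw [Set.indicator_of_notMem hs]
        have : {y : Fin n → ℝ | (0 : Fin (n+1)).insertNth s y ∈
              {x : Fin (n+1) → ℝ | (∀ i, 0 ≤ x i) ∧ ∑ i, x i ≤ c}} = ∅ := by
          ext y; rw [Set.mem_setOf_eq, hmem y]
          simp only [Set.mem_empty_iff_false, iff_false]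
          rintro ⟨⟨h1, h2⟩, h3⟩
          have : 0 ≤ ∑ j, y j := Finset.sum_nonneg fun j _ => h2 j
          exact hs ⟨h1, by linarith⟩
        rw [this, measure_empty]
    rw [lintegral_congr key, lintegral_indicator measurableSet_Icc]
    have hcont : Continuous (fun s : ℝ => (c - s) ^ n / n.factorial) := by
      apply Continuous.div_const
      exact (continuous_const.sub continuous_id).pow n
    rw [← ofReal_integral_eq_lintegral_ofReal (hcont.integrableOn_Icc)]
    · congr 1
      rw [MeasureTheory.integral_Icc_eq_integral_Ioc, ← intervalIntegral.integral_of_le hc]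
      rw [intervalIntegral.integral_div]
      have : (∫ s in (0:ℝ)..c, (c - s) ^ n)
          = ∫ s in (c - c)..(c - 0), s ^ n := intervalIntegral.integral_comp_sub_left (f := fun u => u ^ n) c
      rw [this, sub_self, sub_zero, integral_pow]
      rw [Nat.factorial_succ]
      push_cast
      field_simp
      simp
    · rw [Filter.EventuallyLE, ae_restrict_iff' measurableSet_Icc]
      apply Filter.Eventually.of_forall
      intro s hs
      have : (0:ℝ) ≤ c - s := by linarith [hs.2]
      positivity

lemma filter_succAbove_card {n : ℕ} (i₀ : Fin (n+1)) (Q : Finset (Fin (n+1))) (hi₀ : i₀ ∈ Q) :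
    (Finset.univ.filter (fun j : Fin n => i₀.succAbove j ∈ Q)).card = Q.card - 1 := by
  rw [← Finset.card_erase_of_mem hi₀]
  apply Finset.card_bij (fun j _ => i₀.succAbove j)
  · intro j hj
    simp only [Finset.mem_filter, Finset.mem_univ, true_and] at hj
    exact Finset.mem_erase.mpr ⟨Fin.succAbove_ne i₀ j, hj⟩
  · intro a ha b hb hab
    exact Fin.succAbove_right_injective hab
  · intro i hi
    obtain ⟨hne, hiQ⟩ := Finset.mem_erase.mp hi
    obtain ⟨j, rfl⟩ := Fin.exists_succAbove_eq hne
    exact ⟨j, by simpa using hiQ, rfl⟩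

lemma sum_insertNth_filter {n : ℕ} (i₀ : Fin (n+1)) (Q : Finset (Fin (n+1))) (hi₀ : i₀ ∈ Q)
    (s : ℝ) (y : Fin n → ℝ) :
    ∑ i ∈ Q, (i₀.insertNth s y) i
      = s + ∑ j ∈ Finset.univ.filter (fun j => i₀.succAbove j ∈ Q), y j := by
  rw [← Finset.add_sum_erase _ _ hi₀, Fin.insertNth_apply_same]
  congr 1
  refine Eq.symm (Finset.sum_bij (fun j _ => i₀.succAbove j) ?_ ?_ ?_ ?_)
  · intro j hj
    simp only [Finset.mem_filter, Finset.mem_univ, true_and] at hj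
    exact Finset.mem_erase.mpr ⟨Fin.succAbove_ne i₀ j, hj⟩
  · intro a ha b hb hab
    exact Fin.succAbove_right_injective hab
  · intro i hi
    obtain ⟨hne, hiQ⟩ := Finset.mem_erase.mp hi
    obtain ⟨j, rfl⟩ := Fin.exists_succAbove_eq hne
    exact ⟨j, by simpa using hiQ, rfl⟩
  · intro j hj
    simp

lemma volume_Wset : ∀ (q : ℕ), ∀ (n : ℕ) (Q : Finset (Fin n)), Q.card = q →
    ∀ t c : ℝ, 0 ≤ t → t ≤ c →
    volume {x : Fin n → ℝ | (∀ i, 0 ≤ x i) ∧ (∑ i ∈ Q, x i ≤ t) ∧ ∑ i, x i ≤ c}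
      = ENNReal.ofReal
          ((∑ j ∈ Finset.Icc q n, (n.choose j : ℝ) * t ^ j * (c - t) ^ (n - j)) / n.factorial) := by
  intro q
  induction q with
  | zero =>
    intro n Q hQ t c ht htc
    rw [Finset.card_eq_zero] at hQ
    subst hQ
    have hset : {x : Fin n → ℝ | (∀ i, 0 ≤ x i) ∧ (∑ i ∈ (∅ : Finset (Fin n)), x i ≤ t)
          ∧ ∑ i, x i ≤ c} = {x : Fin n → ℝ | (∀ i, 0 ≤ x i) ∧ ∑ i, x i ≤ c} := by
      ext x; simp [ht]
    rw [hset, volume_corner_simplex n c (le_trans ht htc)]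
    congr 1
    have hIcc : Finset.Icc 0 n = Finset.range (n+1) := by
      rw [Finset.range_eq_Ico, Finset.Ico_add_one_right_eq_Icc]
    have hb := add_pow t (c - t) n
    have hct : t + (c - t) = c := by ring
    rw [hct] at hb
    rw [hIcc, hb]
    congr 1
    apply Finset.sum_congr rfl
    intro j hj
    ring
  | succ q ih =>
    intro n Q hQ t c ht htc
    obtain ⟨i₀, hi₀⟩ := Finset.card_pos.mp (by rw [hQ]; omega)
    cases n with
    | zero => exact i₀.elim0
    | succ m =>
      set Q' := Finset.univ.filter (fun j : Fin m => i₀.succAbove j ∈ Q) with hQ'def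
      have hQ'card : Q'.card = q := by
        rw [hQ'def, filter_succAbove_card i₀ Q hi₀, hQ]
        omega
      set F : ℝ → ℝ := fun s =>
        (∑ j ∈ Finset.Icc q m, (m.choose j : ℝ) * (t - s) ^ j * (c - t) ^ (m - j)) / m.factorial
        with hFdef
      rw [slice_volume i₀ _ (measSet (m+1) Q t c)]
      have key : ∀ s : ℝ, volume {y : Fin m → ℝ | i₀.insertNth s y ∈
            {x : Fin (m+1) → ℝ | (∀ i, 0 ≤ x i) ∧ (∑ i ∈ Q, x i ≤ t) ∧ ∑ i, x i ≤ c}}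
          = Set.indicator (Set.Icc 0 t) (fun s => ENNReal.ofReal (F s)) s := by
        intro s
        have hmem : ∀ y : Fin m → ℝ, (i₀.insertNth s y ∈
            {x : Fin (m+1) → ℝ | (∀ i, 0 ≤ x i) ∧ (∑ i ∈ Q, x i ≤ t) ∧ ∑ i, x i ≤ c})
            ↔ ((0 ≤ s ∧ ∀ j, 0 ≤ y j) ∧ (s + ∑ j ∈ Q', y j ≤ t) ∧ s + ∑ j, y j ≤ c) := by
          intro y
          rw [Set.mem_setOf_eq, Fin.forall_iff_succAbove i₀,
            sum_insertNth_filter i₀ Q hi₀ s y, Fin.sum_univ_succAbove _ i₀]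
          simp [hQ'def]
        by_cases hs : s ∈ Set.Icc 0 t
        · rw [Set.indicator_of_mem hs]
          have hseteq : {y : Fin m → ℝ | i₀.insertNth s y ∈
                {x : Fin (m+1) → ℝ | (∀ i, 0 ≤ x i) ∧ (∑ i ∈ Q, x i ≤ t) ∧ ∑ i, x i ≤ c}}
              = {y : Fin m → ℝ | (∀ j, 0 ≤ y j) ∧ (∑ j ∈ Q', y j ≤ t - s) ∧ ∑ j, y j ≤ c - s} := by
            ext y; rw [Set.mem_setOf_eq, hmem y]
            constructor
            · rintro ⟨⟨_, h2⟩, h3, h4⟩; exact ⟨h2, by linarith, by linarith⟩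
            · rintro ⟨h2, h3, h4⟩; exact ⟨⟨hs.1, h2⟩, by linarith, by linarith⟩
          rw [hseteq, ih m Q' hQ'card (t - s) (c - s) (by linarith [hs.2]) (by linarith)]
          have : c - s - (t - s) = c - t := by ring
          rw [this]
        · rw [Set.indicator_of_notMem hs]
          have hempty : {y : Fin m → ℝ | i₀.insertNth s y ∈
                {x : Fin (m+1) → ℝ | (∀ i, 0 ≤ x i) ∧ (∑ i ∈ Q, x i ≤ t) ∧ ∑ i, x i ≤ c}}
              = ∅ := by
            ext y; rw [Set.mem_setOf_eq, hmem y]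
            simp only [Set.mem_empty_iff_false, iff_false]
            rintro ⟨⟨h1, h2⟩, h3, h4⟩
            have : 0 ≤ ∑ j ∈ Q', y j := Finset.sum_nonneg fun j _ => h2 j
            exact hs ⟨h1, by linarith⟩
          rw [hempty, measure_empty]
      rw [lintegral_congr key, lintegral_indicator measurableSet_Icc]
      have hcont : Continuous F := by
        apply Continuous.div_const
        apply continuous_finset_sum
        intro j _
        exact ((continuous_const.mul ((continuous_const.sub continuous_id).pow j)).mul
          continuous_const)
      rw [← ofReal_integral_eq_lintegral_ofReal (hcont.integrableOn_Icc)]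
      · congr 1
        rw [MeasureTheory.integral_Icc_eq_integral_Ioc, ← intervalIntegral.integral_of_le ht]
        rw [hFdef]
        simp only []
        rw [intervalIntegral.integral_div]
        rw [intervalIntegral.integral_finset_sum (fun j _ =>
          ((by fun_prop : Continuous fun s : ℝ =>
            (m.choose j : ℝ) * (t - s) ^ j * (c - t) ^ (m - j))).intervalIntegrable 0 t)]
        have hterm : ∀ j ∈ Finset.Icc q m,
            (∫ s in (0:ℝ)..t, (m.choose j : ℝ) * (t - s) ^ j * (c - t) ^ (m - j))
              = (m.choose j : ℝ) * (t ^ (j+1) / (j+1)) * (c - t) ^ (m - j) := by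
          intro j _
          rw [intervalIntegral.integral_mul_const, intervalIntegral.integral_const_mul]
          congr 1
          congr 1
          have : (∫ s in (0:ℝ)..t, (t - s) ^ j)
              = ∫ s in (t - t)..(t - 0), s ^ j :=
            intervalIntegral.integral_comp_sub_left (f := fun u => u ^ j) t
          rw [this, sub_self, sub_zero, integral_pow, zero_pow (Nat.succ_ne_zero j)]
          push_cast
          ring
        rw [Finset.sum_congr rfl hterm]
        -- now the reindexing and algebra
        rw [show Finset.Icc (q+1) (m+1) = (Finset.Icc q m).map (addRightEmbedding 1) from
          (Finset.map_add_right_Icc q m 1).symm, Finset.sum_map]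
        rw [Finset.sum_div, Finset.sum_div]
        apply Finset.sum_congr rfl
        intro j hj
        simp only [addRightEmbedding_apply]
        have hsub : m + 1 - (j + 1) = m - j := by omega
        rw [hsub]
        have hnat : ((m+1) * m.choose j : ℝ) = ((m+1).choose (j+1) * (j+1) : ℝ) := by
          exact_mod_cast Nat.add_one_mul_choose_eq m j
        have hfact : ((m+1).factorial : ℝ) = (m+1) * m.factorial := by
          rw [Nat.factorial_succ]; push_cast; ring
        rw [hfact]
        have hj1 : (0:ℝ) < (j+1 : ℝ) := by positivity
        have hmf : (0:ℝ) < (m.factorial : ℝ) := by exact_mod_cast m.factorial_pos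
        rw [show ((m+1).choose (j+1) : ℝ) = (m+1) * m.choose j / (j+1) by
          rw [eq_div_iff hj1.ne']; linarith [hnat]]
        field_simp
      · rw [Filter.EventuallyLE, ae_restrict_iff' measurableSet_Icc]
        apply Filter.Eventually.of_forall
        intro s hs
        rw [hFdef]
        apply div_nonneg _ (by positivity)
        apply Finset.sum_nonneg
        intro j _
        have h1 : (0:ℝ) ≤ t - s := by linarith [hs.2]
        have h2 : (0:ℝ) ≤ c - t := by linarith
        positivity

lemma sum_choose_tail (a : ℕ) : ∀ m : ℕ,
    ∑ i ∈ Finset.range (m+1), (a+1+m).choose (a+1+i)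
      = ∑ k ∈ Finset.range (m+1), (a+k).choose k * 2^(m-k) := by
  intro m
  induction m with
  | zero => simp
  | succ m ih =>
    have pascal : ∀ i, (a+1+(m+1)).choose (a+1+i)
        = (a+1+m).choose (a+i) + (a+1+m).choose (a+1+i) := by
      intro i
      have h1 : a+1+(m+1) = (a+1+m)+1 := by omega
      have h2 : a+1+i = (a+i)+1 := by omega
      rw [h1, h2, Nat.choose_succ_succ]
    have lhs_split : ∑ i ∈ Finset.range (m+2), (a+1+(m+1)).choose (a+1+i)
        = (∑ i ∈ Finset.range (m+2), (a+1+m).choose (a+i))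
          + ∑ i ∈ Finset.range (m+2), (a+1+m).choose (a+1+i) := by
      rw [← Finset.sum_add_distrib]
      exact Finset.sum_congr rfl fun i _ => pascal i
    have first : ∑ i ∈ Finset.range (m+2), (a+1+m).choose (a+i)
        = (a+1+m).choose a + ∑ i ∈ Finset.range (m+1), (a+1+m).choose (a+1+i) := by
      rw [Finset.sum_range_succ' (fun i => (a+1+m).choose (a+i)) (m+1)]
      simp only [add_zero]
      rw [add_comm]
      congr 1
      apply Finset.sum_congr rfl
      intro i _
      congr 1
      omega
    have second : ∑ i ∈ Finset.range (m+2), (a+1+m).choose (a+1+i)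
        = ∑ i ∈ Finset.range (m+1), (a+1+m).choose (a+1+i) := by
      rw [Finset.sum_range_succ]
      have : (a+1+m).choose (a+1+(m+1)) = 0 := Nat.choose_eq_zero_of_lt (by omega)
      rw [this, add_zero]
    have rhs_split : ∑ k ∈ Finset.range (m+2), (a+k).choose k * 2^(m+1-k)
        = 2 * (∑ k ∈ Finset.range (m+1), (a+k).choose k * 2^(m-k))
          + (a+(m+1)).choose (m+1) := by
      rw [Finset.sum_range_succ]
      have hlast : (a+(m+1)).choose (m+1) * 2^(m+1-(m+1)) = (a+(m+1)).choose (m+1) := by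
        simp
      rw [hlast]
      congr 1
      rw [Finset.mul_sum]
      apply Finset.sum_congr rfl
      intro k hk
      have hk' : k ≤ m := by simpa [Nat.lt_succ_iff] using hk
      have : m + 1 - k = (m - k) + 1 := by omega
      rw [this, pow_succ]
      ring
    have hsymm : (a+1+m).choose a = (a+(m+1)).choose (m+1) := by
      have h1 : a + 1 + m = a + (m+1) := by omega
      rw [h1]
      rw [← Nat.choose_symm (by omega : m+1 ≤ a+(m+1))]
      congr 1
      omega
    rw [lhs_split, first, second, ih, rhs_split, hsymm]
    ring

lemma corner_hull (n : ℕ) :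
    convexHull ℝ (insert (0 : Fin n → ℝ) (Set.range fun j : Fin n => Pi.single j (1:ℝ)))
      = {x : Fin n → ℝ | (∀ i, 0 ≤ x i) ∧ ∑ i, x i ≤ 1} := by
  apply le_antisymm
  · apply convexHull_min
    · rintro v hv
      rcases Set.mem_insert_iff.mp hv with rfl | ⟨j, rfl⟩
      · exact ⟨fun i => le_refl 0, by simp⟩
      · constructor
        · intro i
          rcases eq_or_ne i j with rfl | h
          · simp
          · simp [Pi.single_apply, h]
        · simp [Pi.single_apply]
    · rintro x hx y hy α β hα hβ hαβ
      constructor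
      · intro i
        have := hx.1 i
        have := hy.1 i
        simp only [Pi.add_apply, Pi.smul_apply, smul_eq_mul]
        nlinarith
      · simp only [Pi.add_apply, Pi.smul_apply, smul_eq_mul, Finset.sum_add_distrib,
          ← Finset.mul_sum]
        nlinarith [hx.2, hy.2]
  · rintro x ⟨hx1, hx2⟩
    have key := Finset.centerMass_mem_convexHull
      (s := insert (0 : Fin n → ℝ) (Set.range fun j : Fin n => Pi.single j (1:ℝ)))
      (t := (Finset.univ : Finset (Option (Fin n))))
      (w := fun o => Option.elim o (1 - ∑ i, x i) x)
      (z := fun o => Option.elim o 0 (fun j => Pi.single j (1:ℝ)))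
      (by rintro (_ | j) _
          · simpa using hx2
          · exact hx1 j)
      (by rw [Fintype.sum_option]; simp)
      (by rintro (_ | j) _
          · exact Set.mem_insert _ _
          · exact Set.mem_insert_of_mem _ (Set.mem_range_self j))
    have hcm : (Finset.univ : Finset (Option (Fin n))).centerMass
        (fun o => Option.elim o (1 - ∑ i, x i) x)
        (fun o => Option.elim o 0 (fun j => Pi.single j (1:ℝ))) = x := by
      rw [Finset.centerMass]
      rw [Fintype.sum_option, Fintype.sum_option]
      simp only [Option.elim]
      have hw : (1 - ∑ i, x i) + ∑ j, x j = 1 := by ring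
      rw [hw]
      simp only [inv_one, one_smul, smul_zero, zero_add]
      funext i
      rw [Finset.sum_apply]
      simp only [Pi.smul_apply, smul_eq_mul, Pi.single_apply, mul_ite, mul_one, mul_zero]
      simp
    rwa [hcm] at key

lemma card_filter_ge (n p : ℕ) (hp1 : 1 ≤ p) (hpn : p ≤ n) :
    (Finset.univ.filter (fun i : Fin n => p ≤ (i:ℕ)+1)).card = n - p + 1 := by
  rw [show n - p + 1 = (Finset.range (n - p + 1)).card from (Finset.card_range _).symm]
  refine Finset.card_bij' (fun i _ => (i:ℕ) - (p-1))
    (fun k hk => (⟨p - 1 + k, by simp only [Finset.mem_range] at hk; omega⟩ : Fin n))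
    ?_ ?_ ?_ ?_
  · intro i hi
    simp only [Finset.mem_filter, Finset.mem_univ, true_and] at hi
    simp only [Finset.mem_range]
    have := i.isLt
    omega
  · intro k hk
    simp only [Finset.mem_range] at hk
    simp only [Finset.mem_filter, Finset.mem_univ, true_and]
    omega
  · intro i hi
    simp only [Finset.mem_filter, Finset.mem_univ, true_and] at hi
    apply Fin.ext
    simp only []
    omega
  · intro k hk
    simp only [Finset.mem_range] at hk
    simp only []
    omega

/-- with q = n-p+1, the ratio r_{p,q} = vol({φ ≤ 0} ∩ Δ)/vol(Δ)
equals 2^{-q} · ∑_{k=0}^{p-1} C(q-1+k, k) · 2^{-k}. -/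
theorem stmt3 (n p : ℕ) (hp1 : 1 ≤ p) (hpn : p ≤ n)
    (b : Fin (n+1) → (Fin n → ℝ)) (hb : AffineIndependent ℝ b)
    (φ : (Fin n → ℝ) →ᵃ[ℝ] ℝ)
    (hneg : ∀ i : Fin (n+1), (i : ℕ) < p → φ (b i) = -1)
    (hpos : ∀ i : Fin (n+1), p ≤ (i : ℕ) → φ (b i) = 1) :
    volume {v ∈ convexHull ℝ (Set.range b) | φ v ≤ 0}
        / volume (convexHull ℝ (Set.range b))
      = ENNReal.ofReal ((1/2)^(n-p+1)
          * ∑ k ∈ Finset.range p, (Nat.choose (n-p+k) k : ℝ) * (1/2)^k) := by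
  classical
  set v : Fin n → (Fin n → ℝ) := fun j => b j.succ - b 0 with hvdef
  set L : (Fin n → ℝ) →ₗ[ℝ] (Fin n → ℝ) :=
    { toFun := fun x => ∑ j, x j • v j
      map_add' := by
        intro x y
        simp only [Pi.add_apply, add_smul]
        rw [Finset.sum_add_distrib]
      map_smul' := by
        intro r x
        simp only [Pi.smul_apply, smul_eq_mul, RingHom.id_apply]
        rw [Finset.smul_sum]
        apply Finset.sum_congr rfl
        intro j _
        rw [smul_smul] } with hLdef
  set T : (Fin n → ℝ) →ᵃ[ℝ] (Fin n → ℝ) :=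
    { toFun := fun x => b 0 + L x
      linear := L
      map_vadd' := by
        intro x w
        show b 0 + L (w + x) = L w + (b 0 + L x)
        rw [map_add]
        abel } with hTdef
  have hTapp : ∀ x, T x = b 0 + L x := fun x => rfl
  -- linear independence of v
  have hli : LinearIndependent ℝ v := by
    have h1 := (affineIndependent_iff_linearIndependent_vsub ℝ b 0).mp hb
    have h2 := h1.comp
      (fun j : Fin n => (⟨j.succ, Fin.succ_ne_zero j⟩ : {x : Fin (n+1) // x ≠ 0}))
      (fun a a' haa' => Fin.succ_injective _ (by simpa using congrArg Subtype.val haa'))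
    have heq : ((fun (i : {x : Fin (n+1) // x ≠ 0}) => b ↑i -ᵥ b 0) ∘
        (fun j : Fin n => (⟨j.succ, Fin.succ_ne_zero j⟩ : {x : Fin (n+1) // x ≠ 0}))) = v := by
      funext j
      simp [hvdef, vsub_eq_sub]
    rwa [heq] at h2
  have hLinj : Function.Injective L := by
    rw [← LinearMap.ker_eq_bot, LinearMap.ker_eq_bot']
    intro x hx
    have hx' : ∑ j, x j • v j = 0 := hx
    have := Fintype.linearIndependent_iff.mp hli x hx'
    funext i
    exact this i
  have hdet : LinearMap.det L ≠ 0 := by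
    intro h
    have hlt := LinearMap.bot_lt_ker_of_det_eq_zero h
    rw [LinearMap.ker_eq_bot.mpr hLinj] at hlt
    exact lt_irrefl _ hlt
  -- images of vertices
  have hT0 : T 0 = b 0 := by
    rw [hTapp]
    have : L 0 = 0 := map_zero L
    rw [this, add_zero]
  have hLsingle : ∀ j, L (Pi.single j 1) = v j := by
    intro j
    have h0 : L (Pi.single j 1) = ∑ k, (Pi.single j 1 : Fin n → ℝ) k • v k := rfl
    rw [h0, Finset.sum_eq_single j]
    · simp
    · intro k _ hk
      simp [Pi.single_apply, hk]
    · intro h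
      exact absurd (Finset.mem_univ j) h
  have hTsingle : ∀ j, T (Pi.single j 1) = b j.succ := by
    intro j
    rw [hTapp, hLsingle]
    simp [hvdef]
  have himg : T '' (insert 0 (Set.range fun j : Fin n => Pi.single j (1:ℝ))) = Set.range b := by
    rw [Set.image_insert_eq, ← Set.range_comp]
    ext w
    simp only [Set.mem_insert_iff, Set.mem_range, Function.comp]
    constructor
    · rintro (rfl | ⟨j, rfl⟩)
      · exact ⟨0, hT0.symm⟩
      · exact ⟨j.succ, (hTsingle j).symm⟩
    · rintro ⟨i, rfl⟩
      cases i using Fin.cases with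
      | zero => left; exact hT0.symm
      | succ j => right; exact ⟨j, hTsingle j⟩
  have hhull : convexHull ℝ (Set.range b)
      = T '' {x : Fin n → ℝ | (∀ i, 0 ≤ x i) ∧ ∑ i, x i ≤ 1} := by
    rw [← himg, ← AffineMap.image_convexHull, corner_hull]
  -- φ on T
  have hφ0 : φ (b 0) = -1 := hneg 0 (by simp; omega)
  have hφlin : ∀ j : Fin n, φ.linear (v j) = (if p ≤ (j:ℕ)+1 then 2 else 0) := by
    intro j
    have h1 : φ.linear (v j) = φ (b j.succ) - φ (b 0) := by
      have := φ.linearMap_vsub (b j.succ) (b 0)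
      simpa [vsub_eq_sub, hvdef] using this
    rw [h1, hφ0]
    by_cases hj : p ≤ (j:ℕ)+1
    · rw [hpos j.succ (by simpa [Fin.val_succ] using hj), if_pos hj]; ring
    · rw [hneg j.succ (by simp only [Fin.val_succ]; omega), if_neg hj]; ring
  set Q := Finset.univ.filter (fun i : Fin n => p ≤ (i:ℕ)+1) with hQdef
  have hφT : ∀ x : Fin n → ℝ, φ (T x) = -1 + 2 * ∑ i ∈ Q, x i := by
    intro x
    rw [hTapp, add_comm (b 0) (L x)]
    have h1 : φ (L x + b 0) = φ.linear (L x) + φ (b 0) := by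
      have := φ.map_vadd (b 0) (L x)
      simpa [vadd_eq_add] using this
    rw [h1, hφ0]
    have h2 : φ.linear (L x) = ∑ j, x j * (if p ≤ (j:ℕ)+1 then 2 else 0) := by
      show φ.linear (∑ j, x j • v j) = _
      rw [map_sum]
      apply Finset.sum_congr rfl
      intro j _
      rw [LinearMap.map_smul, hφlin j, smul_eq_mul]
    rw [h2]
    have h3 : ∀ j : Fin n, x j * (if p ≤ (j:ℕ)+1 then (2:ℝ) else 0)
        = (if p ≤ (j:ℕ)+1 then 2 * x j else 0) := by
      intro j; split <;> ring
    rw [Finset.sum_congr rfl (fun j _ => h3 j), ← Finset.sum_filter, Finset.mul_sum, hQdef]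
    ring
  have hQcard : Q.card = n - p + 1 := by rw [hQdef]; exact card_filter_ge n p hp1 hpn
  -- the set equality
  have hseteq : {w ∈ convexHull ℝ (Set.range b) | φ w ≤ 0}
      = T '' {x : Fin n → ℝ | (∀ i, 0 ≤ x i) ∧ (∑ i ∈ Q, x i ≤ 1/2) ∧ ∑ i, x i ≤ 1} := by
    rw [hhull]
    ext w
    simp only [Set.mem_setOf_eq, Set.mem_image]
    constructor
    · rintro ⟨⟨x, hx, rfl⟩, hφw⟩
      refine ⟨x, ⟨hx.1, ?_, hx.2⟩, rfl⟩
      rw [hφT x] at hφw; linarith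
    · rintro ⟨x, ⟨h1, h2, h3⟩, rfl⟩
      exact ⟨⟨x, ⟨h1, h3⟩, rfl⟩, by rw [hφT x]; linarith⟩
  -- volume of affine images
  have hvolT : ∀ A : Set (Fin n → ℝ),
      volume (T '' A) = ENNReal.ofReal |LinearMap.det L| * volume A := by
    intro A
    have himg2 : T '' A = b 0 +ᵥ (L '' A) := by
      ext w
      simp only [Set.mem_image, Set.mem_vadd_set, vadd_eq_add]
      constructor
      · rintro ⟨x, hx, rfl⟩; exact ⟨L x, ⟨x, hx, rfl⟩, rfl⟩
      · rintro ⟨u, ⟨x, hx, rfl⟩, rfl⟩; exact ⟨x, hx, rfl⟩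
    rw [himg2, measure_vadd, Measure.addHaar_image_linearMap]
  -- put it together
  have hW := volume_Wset (n-p+1) n Q hQcard (1/2) 1 (by norm_num) (by norm_num)
  have hS := volume_corner_simplex n 1 zero_le_one
  rw [hseteq, hhull, hvolT, hvolT, hW, hS]
  rw [ENNReal.mul_div_mul_left _ _
    (by simp only [ne_eq, ENNReal.ofReal_eq_zero, not_le]; exact abs_pos.mpr hdet)
    ENNReal.ofReal_ne_top]
  have hfac : (0:ℝ) < n.factorial := by exact_mod_cast n.factorial_pos
  rw [one_pow, ← ENNReal.ofReal_div_of_pos (show (0:ℝ) < 1 / n.factorial by positivity)]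
  congr 1
  -- real arithmetic
  have hdiv : ((∑ j ∈ Finset.Icc (n-p+1) n, (n.choose j : ℝ) * (1/2)^j * (1 - 1/2)^(n-j))
      / n.factorial) / (1 / n.factorial)
      = ∑ j ∈ Finset.Icc (n-p+1) n, (n.choose j : ℝ) * (1/2)^j * (1 - 1/2)^(n-j) := by
    field_simp
  rw [hdiv]
  have hstep1 : (∑ j ∈ Finset.Icc (n-p+1) n, (n.choose j : ℝ) * (1/2)^j * (1 - 1/2)^(n-j))
      = ((∑ j ∈ Finset.Icc (n-p+1) n, n.choose j : ℕ) : ℝ) * (1/2)^n := by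
    push_cast
    rw [Finset.sum_mul]
    apply Finset.sum_congr rfl
    intro j hj
    have hj' : j ≤ n := (Finset.mem_Icc.mp hj).2
    rw [show (1 - 1/2 : ℝ) = 1/2 by norm_num, mul_assoc, ← pow_add,
      show j + (n - j) = n from by omega]
  rw [hstep1]
  have htail := sum_choose_tail (n-p) (p-1)
  rw [show p - 1 + 1 = p from by omega, show n - p + 1 + (p-1) = n from by omega] at htail
  have hrange : (∑ j ∈ Finset.Icc (n-p+1) n, n.choose j)
      = ∑ i ∈ Finset.range p, n.choose (n-p+1+i) := by
    rw [← Finset.Ico_add_one_right_eq_Icc, Finset.sum_Ico_eq_sum_range,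
      show n + 1 - (n-p+1) = p from by omega]
  rw [hrange, htail]
  push_cast
  rw [Finset.sum_mul, Finset.mul_sum]
  apply Finset.sum_congr rfl
  intro k hk
  have hk' : k < p := Finset.mem_range.mp hk
  have hpow : ((1:ℝ)/2)^n = (1/2)^(p-1-k) * ((1/2)^(n-p+1) * (1/2)^k) := by
    rw [← pow_add, ← pow_add]
    congr 1
    omega
  rw [hpow]
  have h2 : (2:ℝ)^(p-1-k) * (1/2)^(p-1-k) = 1 := by
    rw [← mul_pow]
    norm_num
  linear_combination (((n-p+k).choose k : ℝ) * (1/2)^(n-p+1) * (1/2)^k) * h2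
end

section
/- Let q : ℝ^n_+ → Δ^{n-1} be the normalization map q(ℓ) = ℓ / (ℓ_1 + ⋯ + ℓ_n), and let χ_n be the uniform probability measure on the unit cube [0,1]^n. Then the pushforward measure ν_n = q_*(χ_n) on Δ^{n-1} has density f_n(ℓ) = k_n · |ℓ|^{-n} with respect to the normalized Lebesgue measure μ_n, where |ℓ| = max_i ℓ_i and k_n^{-1} = ∫_{Δ^{n-1}} |ℓ|^{-n} dμ_n. -/
open MeasureTheory Finset Filter

/-- The open standard simplex Δ^m ⊂ ℝ^{m+1}. -/
def Simplex (m : ℕ) : Set (Fin (m+1) → ℝ) :=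
  {ℓ | (∀ i, 0 < ℓ i) ∧ ∑ i, ℓ i = 1}

/-- Parametrization of the hyperplane ∑ ℓ i = 1 by ℝ^m. -/
noncomputable def emb (m : ℕ) (x : Fin m → ℝ) : Fin (m+1) → ℝ :=
  Fin.snoc x (1 - ∑ i, x i)

/-- Normalized Lebesgue measure of a subset of the simplex Δ^m,
computed as a ratio of Lebesgue volumes in the parametrizing chart. -/
noncomputable def simplexMeasure (m : ℕ) (A : Set (Fin (m+1) → ℝ)) : ENNReal :=
  volume (emb m ⁻¹' A) / volume (emb m ⁻¹' (Simplex m))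

/-- The set Γ_p of length vectors for which every p-element subset is short. -/
def Gamma (m p : ℕ) : Set (Fin (m+1) → ℝ) :=
  {ℓ ∈ Simplex m | ∀ J : Finset (Fin (m+1)), J.card = p → ∑ i ∈ J, ℓ i < 1/2}

/-- The set Λ_p where some coordinate is ≥ 1/(2p). -/
def Lambda (m p : ℕ) : Set (Fin (m+1) → ℝ) :=
  {ℓ ∈ Simplex m | ∃ i, 1/(2*(p:ℝ)) ≤ ℓ i}

/-- The normalized Lebesgue measure μ_n on the simplex Δ^m ⊂ ℝ^{m+1},
as an actual measure on ℝ^{m+1} (supported on the simplex). -/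
noncomputable def simplexProb (m : ℕ) : Measure (Fin (m+1) → ℝ) :=
  (m.factorial : ENNReal) • Measure.map (emb m) (volume.restrict (emb m ⁻¹' Simplex m))

open Set
open scoped ENNReal

variable {m : ℕ}

lemma sum_emb (x : Fin m → ℝ) : ∑ i, emb m x i = 1 := by
  simp [emb, Fin.sum_univ_castSucc]

lemma measurable_sum' : Measurable (fun x : Fin m → ℝ => ∑ i, x i) := by fun_prop

lemma measurable_emb : Measurable (emb m) := by
  rw [measurable_pi_iff]; intro i
  refine Fin.lastCases ?_ (fun j => ?_) i
  · simpa [emb] using (show Measurable fun x : Fin m → ℝ => 1 - ∑ i, x i from measurable_const.sub measurable_sum')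
  · simpa [emb] using measurable_pi_apply j

lemma measurable_sumfun : Measurable (fun y : Fin (m+1) → ℝ => ∑ i, y i) := by fun_prop

lemma lintegral_pow_Ioc {a : ℝ} (ha : 0 ≤ a) :
    ∫⁻ t in Set.Ioc (0:ℝ) a, ENNReal.ofReal (t ^ m) = ENNReal.ofReal (a ^ (m+1) / (m+1)) := by
  rw [← ofReal_integral_eq_lintegral_ofReal]
  · congr 1
    rw [← intervalIntegral.integral_of_le ha, integral_pow]
    simp
  · exact (continuous_pow m).integrableOn_Ioc
  · filter_upwards [ae_restrict_mem measurableSet_Ioc] with t ht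
    have : (0:ℝ) < t := ht.1
    positivity

lemma chart_eq : emb m ⁻¹' Simplex m = {x | ∀ i, 0 < emb m x i} := by
  ext x; simp [Simplex, Set.mem_preimage, sum_emb]

lemma measurableSet_Simplex : MeasurableSet (Simplex m) := by
  have : Simplex m = (⋂ i, {ℓ : Fin (m+1) → ℝ | 0 < ℓ i}) ∩ {ℓ | ∑ i, ℓ i = 1} := by
    ext ℓ; simp [Simplex, Set.mem_iInter]
  rw [this]
  exact (MeasurableSet.iInter fun i =>
    measurableSet_lt measurable_const (measurable_pi_apply i)).inter
    (measurableSet_eq_fun measurable_sumfun measurable_const)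

lemma measurableSet_chart : MeasurableSet (emb m ⁻¹' Simplex m) :=
  measurable_emb measurableSet_Simplex

lemma measurableSet_P : MeasurableSet {x : Fin m → ℝ | ∀ i, 0 ≤ emb m x i} := by
  have : {x : Fin m → ℝ | ∀ i, 0 ≤ emb m x i} = ⋂ i, {x | 0 ≤ emb m x i} := by
    ext x; simp [Set.mem_iInter]
  rw [this]
  exact MeasurableSet.iInter fun i =>
    measurableSet_le measurable_const ((measurable_pi_apply i).comp measurable_emb)

lemma null_hyper (j : Fin m) : volume {x : Fin m → ℝ | x j = 0} = 0 := by
  rw [volume_pi]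
  exact Measure.pi_hyperplane _ j 0

lemma null_sumone : volume {x : Fin m → ℝ | ∑ i, x i = 1} = 0 := by
  rcases m with _ | k
  · have : {x : Fin 0 → ℝ | ∑ i, x i = 1} = ∅ := by
      ext x; simp
    simp [this]
  · set f : (Fin (k+1) → ℝ) →ₗ[ℝ] ℝ := ∑ j, LinearMap.proj j with hfdef
    have hf : ∀ x : Fin (k+1) → ℝ, f x = ∑ j, x j := by
      intro x
      simp [hfdef, LinearMap.proj_apply]
    set x₀ : Fin (k+1) → ℝ := fun _ => ((k:ℝ)+1)⁻¹ with hx₀def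
    have hx₀ : ∑ i, x₀ i = 1 := by
      simp [hx₀def, Finset.sum_const, Finset.card_univ]
      rw [mul_inv_cancel₀]
      positivity
    set s : AffineSubspace ℝ (Fin (k+1) → ℝ) := AffineSubspace.mk' x₀ (LinearMap.ker f) with hsdef
    have hset : {x : Fin (k+1) → ℝ | ∑ i, x i = 1} = (s : Set (Fin (k+1) → ℝ)) := by
      ext x
      rw [Set.mem_setOf_eq, SetLike.mem_coe, hsdef, AffineSubspace.mem_mk',
        LinearMap.mem_ker, vsub_eq_sub, map_sub, hf, hf, sub_eq_zero, hx₀]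
    have hne : s ≠ ⊤ := by
      intro h
      have hmem : (fun _ => 2*((k:ℝ)+1)⁻¹) ∈ s := h ▸ AffineSubspace.mem_top ℝ _ _
      have hmem2 : (fun _ : Fin (k+1) => 2*((k:ℝ)+1)⁻¹) ∈ {x : Fin (k+1) → ℝ | ∑ i, x i = 1} := by
        rw [hset]; exact hmem
      have h2 : ∑ _i : Fin (k+1), 2*((k:ℝ)+1)⁻¹ = 2 := by
        rw [Finset.sum_const, Finset.card_univ, Fintype.card_fin, nsmul_eq_mul]
        have hk : ((k:ℝ)+1) ≠ 0 := by positivity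
        push_cast
        field_simp
      rw [Set.mem_setOf_eq, h2] at hmem2
      norm_num at hmem2
    rw [hset]
    exact Measure.addHaar_affineSubspace volume s hne

lemma P_ae_chart :
    ({x : Fin m → ℝ | ∀ i, 0 ≤ emb m x i} : Set (Fin m → ℝ)) =ᵐ[volume] emb m ⁻¹' Simplex m := by
  rw [chart_eq]
  rw [MeasureTheory.ae_eq_set]
  constructor
  · refine measure_mono_null ?_
      (measure_union_null (measure_iUnion_null fun j => null_hyper j) null_sumone)
    rintro x ⟨hP, hnc⟩
    simp only [Set.mem_setOf_eq, not_forall, not_lt] at hnc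
    obtain ⟨i, hi⟩ := hnc
    have hzero : emb m x i = 0 := le_antisymm hi (hP i)
    refine Fin.lastCases ?_ (fun j => ?_) i hzero
    · intro hz
      right
      have : emb m x (Fin.last m) = 1 - ∑ i, x i := by simp [emb]
      rw [this] at hz
      simp only [Set.mem_setOf_eq]
      linarith
    · intro hz
      left
      refine Set.mem_iUnion.2 ⟨j, ?_⟩
      have : emb m x (Fin.castSucc j) = x j := by simp [emb]
      rw [this] at hz
      exact hz
  · have : ({x : Fin m → ℝ | ∀ i, 0 < emb m x i} \ {x | ∀ i, 0 ≤ emb m x i}) = ∅ :=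
      Set.diff_eq_empty.2 fun x hx i => (hx i).le
    rw [this]
    simp

lemma measurable_snoc2 :
    Measurable (fun p : (Fin m → ℝ) × ℝ => (Fin.snoc p.1 p.2 : Fin (m+1) → ℝ)) := by
  rw [measurable_pi_iff]; intro i
  refine Fin.lastCases ?_ (fun j => ?_) i
  · simpa using measurable_snd
  · simpa using (show Measurable fun x : (Fin m → ℝ) × ℝ => x.1 j from (measurable_pi_apply j).comp measurable_fst)

lemma sum_snoc (x : Fin m → ℝ) (c : ℝ) :
    ∑ i, (Fin.snoc x c : Fin (m+1) → ℝ) i = (∑ i, x i) + c := by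
  simp [Fin.sum_univ_castSucc]

lemma smul_emb (t : ℝ) (x : Fin m → ℝ) :
    t • emb m x = Fin.snoc (t • x) (t - ∑ i, (t • x) i) := by
  funext i
  refine Fin.lastCases ?_ (fun j => ?_) i
  · simp [emb, ← Finset.mul_sum]; ring
  · simp [emb]


theorem star (F : (Fin (m+1) → ℝ) → ℝ≥0∞) (hF : Measurable F) :
    ∫⁻ y in {y : Fin (m+1) → ℝ | 0 < ∑ i, y i}, F y
      = ∫⁻ x : Fin m → ℝ, ∫⁻ t in Set.Ioi (0:ℝ), F (t • emb m x) * ENNReal.ofReal (t ^ m) := by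
  have hU : MeasurableSet {y : Fin (m+1) → ℝ | 0 < ∑ i, y i} :=
    measurableSet_lt measurable_const measurable_sumfun
  set F' : (Fin (m+1) → ℝ) → ℝ≥0∞ := ({y | 0 < ∑ i, y i}).indicator F with hF'def
  have hF' : Measurable F' := hF.indicator hU
  -- RHS transformations
  have hmeas3 : Measurable (fun p : (Fin m → ℝ) × ℝ => F (p.2 • emb m p.1) * ENNReal.ofReal (p.2 ^ m)) := by
    apply Measurable.mul
    · exact hF.comp (measurable_snd.smul (measurable_emb.comp measurable_fst))
    · exact ENNReal.measurable_ofReal.comp ((measurable_snd).pow_const m)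
  have hmeas2 : Measurable (fun p : (Fin m → ℝ) × ℝ =>
      F (Fin.snoc p.1 (p.2 - ∑ i, p.1 i) : Fin (m+1) → ℝ)) := by
    exact hF.comp (measurable_snoc2.comp (measurable_fst.prodMk
      (measurable_snd.sub (measurable_sum'.comp measurable_fst))))
  have hmeas1 : Measurable (fun p : ℝ × (Fin m → ℝ) =>
      F' (Fin.snoc p.2 p.1 : Fin (m+1) → ℝ)) := by
    exact hF'.comp (measurable_snoc2.comp (measurable_snd.prodMk measurable_fst))
  -- step: swap RHS
  rw [lintegral_lintegral_swap (hmeas3.aemeasurable)]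
  -- step: scaling per t
  have hscale : ∀ t ∈ Set.Ioi (0:ℝ),
      (∫⁻ x, F (t • emb m x) * ENNReal.ofReal (t ^ m))
        = ∫⁻ u, F (Fin.snoc u (t - ∑ i, u i) : Fin (m+1) → ℝ) := by
    intro t ht
    have ht' : (0:ℝ) < t := ht
    set G : (Fin m → ℝ) → ℝ≥0∞ := fun u => F (Fin.snoc u (t - ∑ i, u i)) with hGdef
    have hG : Measurable G :=
      hF.comp (measurable_snoc2.comp (measurable_id.prodMk
        (measurable_const.sub measurable_sum')))
    have key : ∀ x : Fin m → ℝ, F (t • emb m x) = G (t • x) := by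
      intro x
      rw [hGdef]
      simp only
      rw [← smul_emb]
    simp_rw [key]
    rw [lintegral_mul_const _ (show Measurable fun x : Fin m → ℝ => G (t • x) from hG.comp (measurable_const_smul t))]
    have hmap : Measure.map (t • ·) (volume : Measure (Fin m → ℝ))
        = ENNReal.ofReal |(t ^ Module.finrank ℝ (Fin m → ℝ))⁻¹| • volume :=
      Measure.map_addHaar_smul volume (ne_of_gt ht')
    have : (∫⁻ x, G (t • x)) = ENNReal.ofReal ((t ^ m)⁻¹) * ∫⁻ u, G u := by
      rw [← lintegral_map hG (measurable_const_smul t), hmap, lintegral_smul_measure]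
      congr 2
      rw [Module.finrank_fin_fun]
      rw [abs_of_pos (by positivity)]
    rw [this, mul_assoc, mul_comm (∫⁻ u, G u), ← mul_assoc]
    rw [← ENNReal.ofReal_mul (by positivity), inv_mul_cancel₀ (by positivity), ENNReal.ofReal_one, one_mul]
  rw [setLIntegral_congr_fun measurableSet_Ioi hscale]
  -- step: swap back
  rw [lintegral_lintegral_swap ?_]; swap
  · exact (hmeas2.comp (measurable_snd.prodMk measurable_fst)).aemeasurable
  -- step: translation per u
  have htrans : ∀ u : Fin m → ℝ,
      (∫⁻ t in Set.Ioi (0:ℝ), F (Fin.snoc u (t - ∑ i, u i) : Fin (m+1) → ℝ))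
        = ∫⁻ t : ℝ, F' (Fin.snoc u t : Fin (m+1) → ℝ) := by
    intro u
    have h1 : ∀ t : ℝ, (Set.Ioi (0:ℝ)).indicator
        (fun t => F (Fin.snoc u (t - ∑ i, u i) : Fin (m+1) → ℝ)) t
        = F' (Fin.snoc u (t - ∑ i, u i) : Fin (m+1) → ℝ) := by
      intro t
      rw [hF'def]
      by_cases ht : t ∈ Set.Ioi (0:ℝ)
      · rw [Set.indicator_of_mem ht, Set.indicator_of_mem]
        simp only [Set.mem_setOf_eq, sum_snoc]
        simpa using ht
      · rw [Set.indicator_of_notMem ht, Set.indicator_of_notMem]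
        simp only [Set.mem_setOf_eq, sum_snoc]
        simp only [Set.mem_Ioi, not_lt] at ht ⊢
        linarith
    rw [← lintegral_indicator measurableSet_Ioi]
    simp_rw [h1]
    have := lintegral_add_right_eq_self (μ := (volume : Measure ℝ))
      (fun t => F' (Fin.snoc u t : Fin (m+1) → ℝ)) (-(∑ i, u i))
    simp_rw [sub_eq_add_neg]
    rw [← this]
  simp_rw [htrans]
  rw [← lintegral_lintegral_swap hmeas1.aemeasurable]
  rw [← lintegral_prod _ hmeas1.aemeasurable]
  have hmp := volume_preserving_piFinSuccAbove (fun _ : Fin (m+1) => ℝ) (Fin.last m)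
  have step : (∫⁻ p : ℝ × (Fin m → ℝ), F' (Fin.snoc p.2 p.1 : Fin (m+1) → ℝ)
      ∂((volume : Measure ℝ).prod volume)) = ∫⁻ y, F' y := by
    have hsymm : ∀ p : ℝ × (Fin m → ℝ),
        (MeasurableEquiv.piFinSuccAbove (fun _ : Fin (m+1) => ℝ) (Fin.last m)).symm p
          = (Fin.snoc p.2 p.1 : Fin (m+1) → ℝ) := by
      intro p
      rw [MeasurableEquiv.piFinSuccAbove_symm_apply]
      simp [Fin.insertNthEquiv, Fin.insertNth_last']
    simp_rw [← hsymm]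
    rw [← Measure.volume_eq_prod, ← hmp.map_eq,
      lintegral_map (show Measurable fun p : ℝ × (Fin m → ℝ) =>
          F' ((MeasurableEquiv.piFinSuccAbove (fun _ : Fin (m+1) => ℝ) (Fin.last m)).symm p)
        from hF'.comp (MeasurableEquiv.measurable _)) (MeasurableEquiv.measurable _)]
    refine lintegral_congr fun a => ?_
    congr 1
    simp [Fin.snocEquiv, Fin.snoc_init_self]
  rw [step, hF'def, ← lintegral_indicator hU]

lemma q_smul_emb {t : ℝ} (ht : t ≠ 0) (x : Fin m → ℝ) :
    (∑ i, (t • emb m x) i)⁻¹ • (t • emb m x) = emb m x := by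
  have hsum : ∑ i, (t • emb m x) i = t := by
    simp [← Finset.mul_sum, sum_emb]
  rw [hsum, smul_smul, inv_mul_cancel₀ ht, one_smul]

lemma master (s : Set (Fin (m+1) → ℝ)) (hs : MeasurableSet s) :
    volume ((fun ℓ : Fin (m+1) → ℝ => (∑ i, ℓ i)⁻¹ • ℓ) ⁻¹' s ∩
        (Set.univ.pi fun _ : Fin (m+1) => Set.Icc (0:ℝ) 1))
      = ∫⁻ x in emb m ⁻¹' Simplex m ∩ emb m ⁻¹' s,
          ENNReal.ofReal ((⨆ i, emb m x i)⁻¹ ^ (m+1) / (m+1)) := by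
  have hq : Measurable (fun ℓ : Fin (m+1) → ℝ => (∑ i, ℓ i)⁻¹ • ℓ) :=
    (measurable_sumfun.inv).smul measurable_id
  have hcube : MeasurableSet (Set.univ.pi fun _ : Fin (m+1) => Set.Icc (0:ℝ) 1) :=
    MeasurableSet.univ_pi fun _ => measurableSet_Icc
  set T : Set (Fin (m+1) → ℝ) :=
    (fun ℓ : Fin (m+1) → ℝ => (∑ i, ℓ i)⁻¹ • ℓ) ⁻¹' s ∩
      (Set.univ.pi fun _ : Fin (m+1) => Set.Icc (0:ℝ) 1) with hTdef
  have hT : MeasurableSet T := (hq hs).inter hcube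
  have hU : MeasurableSet {y : Fin (m+1) → ℝ | 0 < ∑ i, y i} :=
    measurableSet_lt measurable_const measurable_sumfun
  have h0 : volume (T \ {y | 0 < ∑ i, y i}) = 0 := by
    refine measure_mono_null (fun y hy => ?_) (show volume {y : Fin (m+1) → ℝ | y 0 = 0} = 0 by
      rw [volume_pi]; exact Measure.pi_hyperplane _ 0 0)
    obtain ⟨⟨hys, hycube⟩, hyU⟩ := hy
    simp only [Set.mem_setOf_eq, not_lt] at hyU
    have hnn : ∀ i, 0 ≤ y i := fun i => (hycube i (Set.mem_univ i)).1
    have hsum0 : ∑ i, y i = 0 := le_antisymm hyU (Finset.sum_nonneg fun i _ => hnn i)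
    exact (Finset.sum_eq_zero_iff_of_nonneg (fun i _ => hnn i)).1 hsum0 0 (Finset.mem_univ _)
  have hTvol : volume T = volume (T ∩ {y | 0 < ∑ i, y i}) := by
    rw [← measure_inter_add_diff T hU, h0, add_zero]
  have h1 : volume (T ∩ {y | 0 < ∑ i, y i})
      = ∫⁻ y in {y | 0 < ∑ i, y i}, T.indicator 1 y := by
    rw [lintegral_indicator_one hT, Measure.restrict_apply hT]
  have hF : Measurable (T.indicator (1 : (Fin (m+1) → ℝ) → ℝ≥0∞)) :=
    measurable_one.indicator hT
  rw [hTvol, h1, star _ hF]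
  have inner_eq : ∀ x : Fin m → ℝ,
      (∫⁻ t in Set.Ioi (0:ℝ), T.indicator 1 (t • emb m x) * ENNReal.ofReal (t ^ m))
        = ({x : Fin m → ℝ | ∀ i, 0 ≤ emb m x i} ∩ emb m ⁻¹' s).indicator
            (fun x => ENNReal.ofReal ((⨆ i, emb m x i)⁻¹ ^ (m+1) / (m+1))) x := by
    intro x
    have hbdd : BddAbove (Set.range (emb m x)) := Set.Finite.bddAbove (Set.finite_range _)
    by_cases hx : x ∈ {x : Fin m → ℝ | ∀ i, 0 ≤ emb m x i} ∩ emb m ⁻¹' s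
    · obtain ⟨hP, hsx⟩ := hx
      have hex : ∃ i, 0 < emb m x i := by
        by_contra hc; push_neg at hc
        have h1' : (1:ℝ) ≤ 0 := by
          rw [← sum_emb x]; exact Finset.sum_nonpos fun i _ => hc i
        linarith
      obtain ⟨i0, hi0⟩ := hex
      have hS : 0 < ⨆ i, emb m x i := lt_of_lt_of_le hi0 (le_ciSup hbdd i0)
      have hmemT : ∀ t : ℝ, 0 < t → (t • emb m x ∈ T ↔ t ≤ (⨆ i, emb m x i)⁻¹) := by
        intro t ht
        rw [hTdef]
        constructor
        · rintro ⟨-, hcube'⟩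
          rw [Set.mem_univ_pi] at hcube'
          have hle : ∀ i, emb m x i ≤ t⁻¹ := by
            intro i
            have h2 := (hcube' i).2
            rw [Pi.smul_apply, smul_eq_mul] at h2
            rw [← one_div, le_div_iff₀ ht, mul_comm]
            exact h2
          have hSle : (⨆ i, emb m x i) ≤ t⁻¹ := ciSup_le hle
          rw [← inv_inv t]
          exact inv_anti₀ hS hSle
        · intro hle
          have htS : t * (⨆ i, emb m x i) ≤ 1 := by
            have h2 : t * (⨆ i, emb m x i) ≤ (⨆ i, emb m x i)⁻¹ * (⨆ i, emb m x i) :=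
              mul_le_mul_of_nonneg_right hle hS.le
            rwa [inv_mul_cancel₀ (ne_of_gt hS)] at h2
          constructor
          · show (∑ i, (t • emb m x) i)⁻¹ • (t • emb m x) ∈ s
            rw [q_smul_emb (ne_of_gt ht)]
            exact hsx
          · rw [Set.mem_univ_pi]
            intro i
            rw [Pi.smul_apply, smul_eq_mul]
            constructor
            · exact mul_nonneg ht.le (hP i)
            · calc t * emb m x i ≤ t * (⨆ i, emb m x i) :=
                    mul_le_mul_of_nonneg_left (le_ciSup hbdd i) ht.le
                _ ≤ 1 := htS
      have hcond : ∀ t ∈ Set.Ioi (0:ℝ),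
          T.indicator 1 (t • emb m x) * ENNReal.ofReal (t ^ m)
            = (Set.Ioc (0:ℝ) (⨆ i, emb m x i)⁻¹).indicator
                (fun t => ENNReal.ofReal (t ^ m)) t := by
        intro t ht
        have ht' : (0:ℝ) < t := ht
        by_cases htle : t ≤ (⨆ i, emb m x i)⁻¹
        · rw [Set.indicator_of_mem ((hmemT t ht').2 htle), Set.indicator_of_mem (show t ∈ Set.Ioc (0:ℝ) (⨆ i, emb m x i)⁻¹ from ⟨ht', htle⟩),
            Pi.one_apply, one_mul]
        · rw [Set.indicator_of_notMem, Set.indicator_of_notMem, zero_mul]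
          · exact fun hmem => htle hmem.2
          · exact fun hmem => htle ((hmemT t ht').1 hmem)
      rw [setLIntegral_congr_fun measurableSet_Ioi hcond,
        lintegral_indicator measurableSet_Ioc, Measure.restrict_restrict measurableSet_Ioc,
        Set.inter_eq_self_of_subset_left Set.Ioc_subset_Ioi_self,
        lintegral_pow_Ioc (inv_nonneg.2 hS.le), Set.indicator_of_mem (show x ∈ {x : Fin m → ℝ | ∀ i, 0 ≤ emb m x i} ∩ emb m ⁻¹' s from ⟨hP, hsx⟩)]
    · rw [Set.indicator_of_notMem hx]
      have hz : ∀ t ∈ Set.Ioi (0:ℝ),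
          T.indicator 1 (t • emb m x) * ENNReal.ofReal (t ^ m) = (fun _ => (0:ℝ≥0∞)) t := by
        intro t ht
        have ht' : (0:ℝ) < t := ht
        rw [Set.indicator_of_notMem, zero_mul]
        rintro ⟨hys, hycube⟩
        apply hx
        constructor
        · intro i
          have h2 := (Set.mem_univ_pi.1 hycube i).1
          rw [Pi.smul_apply, smul_eq_mul] at h2
          exact (mul_nonneg_iff_of_pos_left ht').1 h2
        · show emb m x ∈ s
          have := hys
          rw [Set.mem_preimage, q_smul_emb (ne_of_gt ht')] at this
          exact this
      rw [setLIntegral_congr_fun measurableSet_Ioi hz, lintegral_zero]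
  rw [lintegral_congr inner_eq,
    lintegral_indicator (measurableSet_P.inter (measurable_emb hs))]
  exact setLIntegral_congr (MeasureTheory.ae_eq_set_inter P_ae_chart (ae_eq_refl _))


lemma total :
    ∫⁻ x in emb m ⁻¹' Simplex m, ENNReal.ofReal ((⨆ i, emb m x i)⁻¹ ^ (m+1))
      = ENNReal.ofReal ((m:ℝ)+1) := by
  have h := master (m := m) Set.univ MeasurableSet.univ
  simp only [Set.preimage_univ, Set.univ_inter, Set.inter_univ] at h
  have hcubevol : volume (Set.univ.pi fun _ : Fin (m+1) => Set.Icc (0:ℝ) 1) = 1 := by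
    rw [volume_pi, Measure.pi_pi]
    simp [Real.volume_Icc]
  rw [hcubevol] at h
  have hsplit : ∀ x : Fin m → ℝ,
      ENNReal.ofReal ((⨆ i, emb m x i)⁻¹ ^ (m+1) / (m+1))
        = ENNReal.ofReal (((m:ℝ)+1)⁻¹) * ENNReal.ofReal ((⨆ i, emb m x i)⁻¹ ^ (m+1)) := by
    intro x
    rw [div_eq_mul_inv, mul_comm, ← ENNReal.ofReal_mul (by positivity)]
  simp_rw [hsplit] at h
  rw [lintegral_const_mul' _ _ ENNReal.ofReal_ne_top] at h
  have hc : ENNReal.ofReal (((m:ℝ)+1)⁻¹) = (ENNReal.ofReal ((m:ℝ)+1))⁻¹ :=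
    ENNReal.ofReal_inv_of_pos (by positivity)
  rw [hc] at h
  have hne0 : ENNReal.ofReal ((m:ℝ)+1) ≠ 0 :=
    ne_of_gt (ENNReal.ofReal_pos.2 (by positivity))
  calc (∫⁻ x in emb m ⁻¹' Simplex m, ENNReal.ofReal ((⨆ i, emb m x i)⁻¹ ^ (m+1)))
      = (ENNReal.ofReal ((m:ℝ)+1) * (ENNReal.ofReal ((m:ℝ)+1))⁻¹)
          * ∫⁻ x in emb m ⁻¹' Simplex m, ENNReal.ofReal ((⨆ i, emb m x i)⁻¹ ^ (m+1)) := by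
        rw [ENNReal.mul_inv_cancel hne0 ENNReal.ofReal_ne_top, one_mul]
    _ = ENNReal.ofReal ((m:ℝ)+1)
          * ((ENNReal.ofReal ((m:ℝ)+1))⁻¹
            * ∫⁻ x in emb m ⁻¹' Simplex m, ENNReal.ofReal ((⨆ i, emb m x i)⁻¹ ^ (m+1))) := by
        rw [mul_assoc]
    _ = ENNReal.ofReal ((m:ℝ)+1) * 1 := by rw [← h]
    _ = ENNReal.ofReal ((m:ℝ)+1) := mul_one _

lemma measurable_supfun : Measurable (fun ℓ : Fin (m+1) → ℝ => (⨆ i, ℓ i)⁻¹ ^ (m+1)) :=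
  ((Measurable.iSup fun i => measurable_pi_apply i).inv).pow_const _

lemma Jval :
    (∫ ℓ', (⨆ i, ℓ' i)⁻¹ ^ (m+1) ∂(simplexProb m)) = ((m+1).factorial : ℝ) := by
  rw [simplexProb, integral_smul_measure]
  rw [integral_map measurable_emb.aemeasurable
    (measurable_supfun.aestronglyMeasurable)]
  rw [integral_eq_lintegral_of_nonneg_ae ?_ ?_]
  · rw [total]
    rw [ENNReal.toReal_ofReal (by positivity)]
    rw [show ((m.factorial : ℝ≥0∞)).toReal = (m.factorial : ℝ) by simp]
    rw [smul_eq_mul]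
    push_cast [Nat.factorial_succ]
    ring
  · filter_upwards [ae_restrict_mem measurableSet_chart] with x hx
    obtain ⟨hpos, -⟩ := (Set.mem_preimage.1 hx : emb m x ∈ Simplex m)
    have hbdd : BddAbove (Set.range (emb m x)) := Set.Finite.bddAbove (Set.finite_range _)
    have hS : 0 < ⨆ i, emb m x i := lt_of_lt_of_le (hpos 0) (le_ciSup hbdd 0)
    positivity
  · exact (measurable_supfun.comp measurable_emb).aestronglyMeasurable

private theorem stmt13x :
    Measure.map (fun ℓ : Fin (m+1) → ℝ => (∑ i, ℓ i)⁻¹ • ℓ)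
        (volume.restrict (Set.univ.pi fun _ : Fin (m+1) => Set.Icc (0:ℝ) 1))
      = (simplexProb m).withDensity (fun ℓ =>
          ENNReal.ofReal
            ((∫ ℓ', (⨆ i, ℓ' i)⁻¹ ^ (m+1) ∂(simplexProb m))⁻¹
              * (⨆ i, ℓ i)⁻¹ ^ (m+1))) := by
  have hq : Measurable (fun ℓ : Fin (m+1) → ℝ => (∑ i, ℓ i)⁻¹ • ℓ) :=
    (measurable_sumfun.inv).smul measurable_id
  have hdens : Measurable (fun ℓ : Fin (m+1) → ℝ =>
      ENNReal.ofReal ((((m+1).factorial : ℝ))⁻¹ * (⨆ i, ℓ i)⁻¹ ^ (m+1))) :=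
    ENNReal.measurable_ofReal.comp (measurable_supfun.const_mul _)
  simp only [Jval]
  refine Measure.ext fun s hs => ?_
  rw [Measure.map_apply hq hs, Measure.restrict_apply (hq hs), master s hs]
  rw [withDensity_apply _ hs, simplexProb, Measure.restrict_smul, lintegral_smul_measure,
    Measure.restrict_map measurable_emb hs,
    lintegral_map hdens measurable_emb,
    Measure.restrict_restrict (measurable_emb hs), Set.inter_comm (emb m ⁻¹' s)]
  rw [smul_eq_mul, ← lintegral_const_mul' _ _ (ENNReal.natCast_ne_top m.factorial)]
  refine setLIntegral_congr_fun (measurableSet_chart.inter (measurable_emb hs))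
    (fun x hx => ?_)
  obtain ⟨hpos, -⟩ := (Set.mem_preimage.1 hx.1 : emb m x ∈ Simplex m)
  have hbdd : BddAbove (Set.range (emb m x)) := Set.Finite.bddAbove (Set.finite_range _)
  have hS : 0 < ⨆ i, emb m x i := lt_of_lt_of_le (hpos 0) (le_ciSup hbdd 0)
  rw [show ((m.factorial : ℝ≥0∞)) = ENNReal.ofReal (m.factorial : ℝ) by simp]
  rw [← ENNReal.ofReal_mul (by positivity)]
  congr 1
  have hfact : ((m+1).factorial : ℝ) = ((m:ℝ)+1) * (m.factorial : ℝ) := by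
    push_cast [Nat.factorial_succ]; ring
  rw [hfact]
  have hf0 : (m.factorial : ℝ) ≠ 0 := Nat.cast_ne_zero.2 (Nat.factorial_ne_zero m)
  have hm1 : ((m:ℝ)+1) ≠ 0 := by positivity
  field_simp

/-- the pushforward under the normalization map
q(ℓ) = ℓ/(ℓ_1+⋯+ℓ_n) of the uniform probability measure on the unit cube
has density ℓ ↦ k_n·|ℓ|^{-n} with respect to μ_n, where |ℓ| = max_i ℓ_i and
k_n⁻¹ = ∫ |ℓ|^{-n} dμ_n.  (Here n = m+1.) -/
theorem stmt13 (m : ℕ) :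
    Measure.map (fun ℓ : Fin (m+1) → ℝ => (∑ i, ℓ i)⁻¹ • ℓ)
        (volume.restrict (Set.univ.pi fun _ : Fin (m+1) => Set.Icc (0:ℝ) 1))
      = (simplexProb m).withDensity (fun ℓ =>
          ENNReal.ofReal
            ((∫ ℓ', (⨆ i, ℓ' i)⁻¹ ^ (m+1) ∂(simplexProb m))⁻¹
              * (⨆ i, ℓ i)⁻¹ ^ (m+1))) := stmt13x (m := m)
end

section
/- Let k_n be defined by k_n^{-1} = ∫_{Δ^{n-1}} |ℓ|^{-n} dμ_n where |ℓ| = max_i ℓ_i and μ_n is the normalized Lebesgue measure on the open standard simplex Δ^{n-1} ⊆ ℝ^n. Then for every integer p ≥ 1, k_n^{-1} ≥ (2p)^n · (1 - n·((2p-1)/(2p))^{n-1}). Consequently the sequence (2p)^n · k_n is bounded as n → ∞. -/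
open MeasureTheory Finset Filter

open scoped Pointwise ENNReal


def Tset (m : ℕ) : Set (Fin m → ℝ) := {x | (∀ i, 0 < x i) ∧ ∑ i, x i < 1}

lemma meas_pos_part (m : ℕ) : MeasurableSet {x : Fin m → ℝ | ∀ i, 0 < x i} := by
  have : {x : Fin m → ℝ | ∀ i, 0 < x i} = ⋂ i, {x | 0 < x i} := by ext x; simp
  rw [this]
  exact MeasurableSet.iInter fun i => measurableSet_lt measurable_const (measurable_pi_apply i)

lemma meas_sum_lt (m : ℕ) (s : ℝ) : MeasurableSet {x : Fin m → ℝ | ∑ i, x i < s} :=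
  measurableSet_lt (Finset.measurable_sum _ fun i _ => measurable_pi_apply i) measurable_const

lemma meas_Tset (m : ℕ) : MeasurableSet (Tset m) :=
  (meas_pos_part m).inter (meas_sum_lt m 1)

lemma Tset_subset (m : ℕ) : Tset m ⊆ Set.univ.pi fun _ : Fin m => Set.Ioo (0:ℝ) 1 := by
  rintro x ⟨h1, h2⟩ i _
  refine ⟨h1 i, lt_of_le_of_lt ?_ h2⟩
  exact Finset.single_le_sum (fun j _ => (h1 j).le) (mem_univ i)

lemma vol_Tset_lt_top (m : ℕ) : volume (Tset m) < ⊤ := by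
  apply lt_of_le_of_lt (measure_mono (Tset_subset m))
  rw [volume_pi_pi]
  simp [Real.volume_Ioo]

lemma scale_Tset (m : ℕ) {s : ℝ} (hs : 0 < s) :
    {x : Fin m → ℝ | (∀ i, 0 < x i) ∧ ∑ i, x i < s} = s • Tset m := by
  ext x
  rw [Set.mem_smul_set_iff_inv_smul_mem₀ hs.ne']
  simp only [Set.mem_setOf_eq, Tset, Pi.smul_apply, smul_eq_mul, ← Finset.mul_sum]
  have key : ∀ t : ℝ, s⁻¹ * t = t / s := fun t => by rw [mul_comm]; rfl
  constructor
  · rintro ⟨h1, h2⟩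
    refine ⟨fun i => mul_pos (inv_pos.2 hs) (h1 i), ?_⟩
    rw [key, div_lt_one hs]; exact h2
  · rintro ⟨h1, h2⟩
    rw [key, div_lt_one hs] at h2
    refine ⟨fun i => ?_, h2⟩
    have := h1 i
    nlinarith [inv_pos.2 hs]

lemma vol_scale (m : ℕ) {s : ℝ} (hs : 0 < s) :
    volume {x : Fin m → ℝ | (∀ i, 0 < x i) ∧ ∑ i, x i < s}
      = ENNReal.ofReal (s ^ m) * volume (Tset m) := by
  rw [scale_Tset m hs, Measure.addHaar_smul]
  congr 2
  rw [Module.finrank_pi, Fintype.card_fin, abs_of_pos (by positivity)]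

lemma null_coord (m : ℕ) (j : Fin m) : volume {x : Fin m → ℝ | x j = 0} = 0 := by
  have h : {x : Fin m → ℝ | x j = 0} = (LinearMap.ker (LinearMap.proj j (R := ℝ) (φ := fun _ : Fin m => ℝ)) : Set (Fin m → ℝ)) := by
    ext x; simp [LinearMap.mem_ker]
  rw [h]
  apply Measure.addHaar_submodule
  intro htop
  have : (Function.update (0 : Fin m → ℝ) j 1) ∈ LinearMap.ker (LinearMap.proj j (R := ℝ) (φ := fun _ : Fin m => ℝ)) := htop ▸ Submodule.mem_top
  simp [LinearMap.mem_ker] at this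

lemma null_sum (m : ℕ) (hm : 0 < m) (s : ℝ) : volume {x : Fin m → ℝ | ∑ i, x i = s} = 0 := by
  set f : (Fin m → ℝ) →ₗ[ℝ] ℝ :=
    { toFun := fun x => ∑ i, x i
      map_add' := fun x y => by simp [Finset.sum_add_distrib]
      map_smul' := fun c x => by simp [Finset.mul_sum] } with hf
  set j : Fin m := ⟨0, hm⟩
  set x0 : Fin m → ℝ := Function.update (0 : Fin m → ℝ) j s with hx0
  have hfx0 : f x0 = s := by simp [hf, hx0, Finset.sum_update_of_mem]
  set A : AffineSubspace ℝ (Fin m → ℝ) := AffineSubspace.mk' x0 (LinearMap.ker f)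
  have hA : {x : Fin m → ℝ | ∑ i, x i = s} = (A : Set (Fin m → ℝ)) := by
    ext x
    have hmem : x ∈ A ↔ x - x0 ∈ LinearMap.ker f := by
      exact AffineSubspace.mem_mk' (k := ℝ) (p := x0) (q := x) (direction := LinearMap.ker f)
    have hfx : f x = ∑ i, x i := rfl
    simp only [Set.mem_setOf_eq, AffineSubspace.mem_coe, hmem, LinearMap.mem_ker, map_sub, hfx0, hfx, sub_eq_zero]
  rw [hA]
  apply Measure.addHaar_affineSubspace
  intro htop
  have : x0 + Function.update (0 : Fin m → ℝ) j 1 ∈ A := htop ▸ AffineSubspace.mem_top ℝ _ _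
  rw [← AffineSubspace.mem_coe, ← hA] at this
  simp only [Set.mem_setOf_eq] at this
  simp only [Pi.add_apply] at this
  rw [Finset.sum_add_distrib] at this
  have h1 : ∑ i, x0 i = s := by simpa [hf] using hfx0
  have h2 : ∑ i, Function.update (0 : Fin m → ℝ) j 1 i = 1 := by simp [Finset.sum_update_of_mem]
  rw [h1, h2] at this
  linarith




lemma int_pow_Ioo (m : ℕ) : ∫ t in Set.Ioo (0:ℝ) 1, (1 - t) ^ m = 1 / (m + 1) := by
  rw [← MeasureTheory.integral_Ioc_eq_integral_Ioo,
      ← intervalIntegral.integral_of_le (by norm_num : (0:ℝ) ≤ 1)]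
  have := intervalIntegral.integral_comp_sub_left (a := (0:ℝ)) (b := 1) (fun x => x ^ m) 1
  simp only [sub_zero, sub_self] at this
  rw [this, integral_pow]
  simp

lemma vol_Tset (m : ℕ) : volume (Tset m) = ENNReal.ofReal (1 / m.factorial) := by
  induction m with
  | zero =>
    have : Tset 0 = Set.univ := by
      ext x; simp [Tset]
    rw [this]
    rw [show (volume : Measure (Fin 0 → ℝ)) = Measure.pi (fun _ => volume) from rfl, Measure.pi_univ]
    simp
  | succ m ih =>
    have e := MeasurableEquiv.piFinSuccAbove (fun _ : Fin (m+1) => ℝ) 0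
    have hmp := volume_preserving_piFinSuccAbove (fun _ : Fin (m+1) => ℝ) 0
    set B : Set (ℝ × (Fin m → ℝ)) :=
      {q | 0 < q.1 ∧ ((∀ i, 0 < q.2 i) ∧ q.1 + ∑ i, q.2 i < 1)} with hB
    have hBmeas : MeasurableSet B := by
      apply MeasurableSet.inter
      · exact measurableSet_lt measurable_const measurable_fst
      apply MeasurableSet.inter
      · show MeasurableSet {q : ℝ × (Fin m → ℝ) | ∀ i, 0 < q.2 i}
        have : {q : ℝ × (Fin m → ℝ) | ∀ i, 0 < q.2 i} = ⋂ i, {q | 0 < q.2 i} := by ext q; simp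
        rw [this]
        refine MeasurableSet.iInter fun i => ?_
        have hm2 : Measurable fun q : ℝ × (Fin m → ℝ) => q.2 i :=
          (measurable_pi_apply i).comp measurable_snd
        exact measurableSet_lt measurable_const hm2
      · exact measurableSet_lt
          (measurable_fst.add (Finset.measurable_sum _ fun i _ =>
            ((measurable_pi_apply i).comp measurable_snd : Measurable fun q : ℝ × (Fin m → ℝ) => q.2 i)))
          measurable_const
    have hpre : Tset (m+1) = (MeasurableEquiv.piFinSuccAbove (fun _ : Fin (m+1) => ℝ) 0) ⁻¹' B := by
      ext x
      simp only [Tset, Set.mem_setOf_eq, Set.mem_preimage, MeasurableEquiv.piFinSuccAbove,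
        MeasurableEquiv.coe_mk, hB, Fin.insertNthEquiv, Equiv.coe_fn_mk, Fin.removeNth,
        Fin.forall_iff_succAbove (0 : Fin (m+1)), Fin.succAbove_zero, Fin.sum_univ_succ]
      constructor
      · rintro ⟨h1, h2⟩
        exact ⟨h1.1, h1.2, h2⟩
      · rintro ⟨h1, h2, h3⟩
        exact ⟨⟨h1, h2⟩, h3⟩
    have key : volume (Tset (m+1)) = (volume.prod volume) B := by
      rw [hpre]
      exact hmp.measure_preimage hBmeas.nullMeasurableSet
    rw [key, Measure.prod_apply hBmeas]
    have hslice : ∀ t : ℝ, volume (Prod.mk t ⁻¹' B)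
        = (Set.Ioo (0:ℝ) 1).indicator (fun t => ENNReal.ofReal ((1-t) ^ m) * volume (Tset m)) t := by
      intro t
      rcases lt_or_ge 0 t with ht | ht
      · rcases lt_or_ge t 1 with ht1 | ht1
        · have : Prod.mk t ⁻¹' B = {y : Fin m → ℝ | (∀ i, 0 < y i) ∧ ∑ i, y i < 1 - t} := by
            ext y
            simp only [Set.mem_preimage, hB, Set.mem_setOf_eq]
            constructor
            · rintro ⟨-, h2, h3⟩; exact ⟨h2, by linarith⟩
            · rintro ⟨h2, h3⟩; exact ⟨ht, h2, by linarith⟩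
          rw [this, vol_scale m (by linarith), Set.indicator_of_mem (Set.mem_Ioo.mpr ⟨ht, ht1⟩)]
        · have : Prod.mk t ⁻¹' B = ∅ := by
            ext y
            simp only [Set.mem_preimage, hB, Set.mem_setOf_eq, Set.mem_empty_iff_false, iff_false]
            rintro ⟨h1, h2, h3⟩
            have : 0 ≤ ∑ i, y i := Finset.sum_nonneg fun i _ => (h2 i).le
            linarith
          rw [this, Set.indicator_of_notMem (by simp [ht1])]
          simp
      · have : Prod.mk t ⁻¹' B = ∅ := by
          ext y
          simp only [Set.mem_preimage, hB, Set.mem_setOf_eq, Set.mem_empty_iff_false, iff_false]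
          rintro ⟨h1, -, -⟩; linarith
        rw [this, Set.indicator_of_notMem (by simp [ht])]
        simp
    calc ∫⁻ t, volume (Prod.mk t ⁻¹' B)
        = ∫⁻ t, (Set.Ioo (0:ℝ) 1).indicator (fun t => ENNReal.ofReal ((1-t) ^ m) * volume (Tset m)) t := by
          exact lintegral_congr hslice
      _ = ∫⁻ t in Set.Ioo (0:ℝ) 1, ENNReal.ofReal ((1-t) ^ m) * volume (Tset m) := by
          rw [lintegral_indicator measurableSet_Ioo]
      _ = (∫⁻ t in Set.Ioo (0:ℝ) 1, ENNReal.ofReal ((1-t) ^ m)) * volume (Tset m) := by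
          rw [lintegral_mul_const]
          exact (ENNReal.measurable_ofReal.comp ((measurable_const.sub measurable_id).pow_const m))
      _ = ENNReal.ofReal (1 / (m + 1)) * ENNReal.ofReal (1 / m.factorial) := by
          rw [ih]
          congr 1
          rw [← MeasureTheory.ofReal_integral_eq_lintegral_ofReal]
          · rw [int_pow_Ioo m]
          · apply (intervalIntegrable_iff_integrableOn_Ioo_of_le (by norm_num : (0:ℝ) ≤ 1)).1
            apply Continuous.intervalIntegrable
            exact (continuous_const.sub continuous_id).pow m
          · filter_upwards [self_mem_ae_restrict measurableSet_Ioo] with t ht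
            have : (0:ℝ) ≤ 1 - t := by linarith [ht.2]
            positivity
      _ = ENNReal.ofReal (1 / (m+1).factorial) := by
          rw [← ENNReal.ofReal_mul (by positivity)]
          congr 1
          rw [Nat.factorial_succ]
          push_cast
          field_simp
lemma emb_meas (m : ℕ) : Measurable (emb m) := by
  unfold emb
  refine measurable_pi_lambda _ fun i => ?_
  refine Fin.lastCases ?_ ?_ i
  · simpa [Fin.snoc_last] using
      (show Measurable fun c : Fin m → ℝ => 1 - ∑ i, c i from measurable_const.sub (Finset.measurable_sum univ fun j _ => measurable_pi_apply j))
  · intro j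
    simpa [Fin.snoc_castSucc] using measurable_pi_apply j

lemma emb_preimage (m : ℕ) : emb m ⁻¹' Simplex m = Tset m := by
  ext x
  simp only [Set.mem_preimage, Simplex, Tset, Set.mem_setOf_eq]
  have hsum : ∑ i, emb m x i = 1 := by
    unfold emb
    rw [Fin.sum_univ_castSucc]
    simp [Fin.snoc_castSucc, Fin.snoc_last]
  constructor
  · rintro ⟨h1, -⟩
    refine ⟨fun i => by simpa [emb, Fin.snoc_castSucc] using h1 i.castSucc, ?_⟩
    have := h1 (Fin.last m)
    simp only [emb, Fin.snoc_last] at this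
    linarith
  · rintro ⟨h1, h2⟩
    refine ⟨fun i => ?_, hsum⟩
    refine Fin.lastCases ?_ ?_ i
    · simp only [emb, Fin.snoc_last]; linarith
    · intro j; simpa [emb, Fin.snoc_castSucc] using h1 j

lemma emb_sum (m : ℕ) (x : Fin m → ℝ) : ∑ i, emb m x i = 1 := by
  unfold emb
  rw [Fin.sum_univ_castSucc]
  simp [Fin.snoc_castSucc, Fin.snoc_last]

lemma sup_mem (m : ℕ) {ℓ : Fin (m+1) → ℝ} (hpos : ∀ i, 0 < ℓ i) (hsum : ∑ i, ℓ i = 1) :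
    1/(m+1 : ℝ) ≤ (⨆ i, ℓ i) ∧ (⨆ i, ℓ i) ≤ 1 := by
  have hb : BddAbove (Set.range ℓ) := Set.Finite.bddAbove (Set.finite_range ℓ)
  constructor
  · have h2 : ∑ i, ℓ i ≤ (univ : Finset (Fin (m+1))).card • (⨆ j, ℓ j) :=
      Finset.sum_le_card_nsmul _ _ _ (fun i _ => le_ciSup hb i)
    rw [hsum, card_univ, Fintype.card_fin, nsmul_eq_mul] at h2
    rw [div_le_iff₀ (by positivity)]
    push_cast at h2 ⊢
    linarith
  · refine ciSup_le fun i => ?_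
    have := Finset.single_le_sum (fun j _ => (hpos j).le) (mem_univ i)
    linarith

lemma F_meas (m : ℕ) : Measurable (fun ℓ : Fin (m+1) → ℝ => (⨆ i, ℓ i)⁻¹ ^ (m+1)) := by
  have h1 : Measurable (fun ℓ : Fin (m+1) → ℝ => ⨆ i, ℓ i) :=
    Measurable.iSup fun i => measurable_pi_apply i
  exact (h1.inv).pow_const _

lemma integral_simplexProb (m : ℕ) :
    ∫ ℓ, (⨆ i, ℓ i)⁻¹ ^ (m+1) ∂(simplexProb m)
      = (m.factorial : ℝ) * ∫ x in Tset m, (⨆ i, emb m x i)⁻¹ ^ (m+1) := by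
  unfold simplexProb
  rw [emb_preimage, integral_smul_measure,
    integral_map (emb_meas m).aemeasurable (F_meas m).aestronglyMeasurable]
  simp

lemma g_bounds (m : ℕ) {x : Fin m → ℝ} (hx : x ∈ Tset m) :
    1 ≤ (⨆ i, emb m x i)⁻¹ ^ (m+1) ∧ (⨆ i, emb m x i)⁻¹ ^ (m+1) ≤ (m+1 : ℝ)^(m+1) := by
  have hpos : ∀ i, 0 < emb m x i := by
    have := (emb_preimage m).symm ▸ hx
    exact ((Set.mem_preimage.1 this : emb m x ∈ Simplex m)).1
  have hsup := sup_mem m hpos (emb_sum m x)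
  have hsup0 : 0 < ⨆ i, emb m x i := lt_of_lt_of_le (by positivity) hsup.1
  constructor
  · apply one_le_pow₀
    rw [le_inv_comm₀ one_pos hsup0]
    simpa using hsup.2
  · apply pow_le_pow_left₀ (by positivity)
    rw [inv_le_comm₀ hsup0 (by positivity)]
    rw [show ((m:ℝ)+1)⁻¹ = 1/((m:ℝ)+1) from (one_div _).symm]
    exact_mod_cast hsup.1

lemma g_integrableOn (m : ℕ) :
    IntegrableOn (fun x => (⨆ i, emb m x i)⁻¹ ^ (m+1)) (Tset m) := by
  apply Measure.integrableOn_of_bounded (M := (m+1 : ℝ)^(m+1)) (vol_Tset_lt_top m).ne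
  · exact ((F_meas m).comp (emb_meas m)).aestronglyMeasurable
  · filter_upwards [self_mem_ae_restrict (meas_Tset m)] with x hx
    have := g_bounds m hx
    rw [Real.norm_eq_abs, abs_of_nonneg (by linarith [this.1])]
    exact this.2

lemma volA_bound (m : ℕ) {c : ℝ} (hc0 : 0 < c) (hc1 : c < 1) (i : Fin (m+1)) :
    volume {x ∈ Tset m | c ≤ emb m x i}
      ≤ ENNReal.ofReal ((1-c) ^ m) * volume (Tset m) := by
  rcases Nat.eq_zero_or_pos m with hm | hm
  · subst hm
    calc volume {x ∈ Tset 0 | c ≤ emb 0 x i} ≤ volume (Tset 0) :=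
          measure_mono (Set.sep_subset _ _)
      _ = ENNReal.ofReal ((1-c) ^ 0) * volume (Tset 0) := by simp
  refine Fin.lastCases ?_ ?_ i
  · -- last coordinate : emb x last = 1 - ∑ x
    have hsub : {x ∈ Tset m | c ≤ emb m x (Fin.last m)}
        ⊆ {x : Fin m → ℝ | (∀ i, 0 < x i) ∧ ∑ i, x i < 1 - c}
          ∪ {x : Fin m → ℝ | ∑ i, x i = 1 - c} := by
      rintro x ⟨⟨h1, h2⟩, h3⟩
      simp only [emb, Fin.snoc_last] at h3
      rcases lt_or_eq_of_le (by linarith : ∑ i, x i ≤ 1 - c) with h | h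
      · exact Or.inl ⟨h1, h⟩
      · exact Or.inr h
    calc volume {x ∈ Tset m | c ≤ emb m x (Fin.last m)}
        ≤ volume ({x : Fin m → ℝ | (∀ i, 0 < x i) ∧ ∑ i, x i < 1 - c}
            ∪ {x : Fin m → ℝ | ∑ i, x i = 1 - c}) := measure_mono hsub
      _ ≤ volume {x : Fin m → ℝ | (∀ i, 0 < x i) ∧ ∑ i, x i < 1 - c}
            + volume {x : Fin m → ℝ | ∑ i, x i = 1 - c} := measure_union_le _ _
      _ = ENNReal.ofReal ((1-c) ^ m) * volume (Tset m) := by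
          rw [vol_scale m (by linarith), null_sum m hm, add_zero]
  · intro j
    set v : Fin m → ℝ := Function.update (0 : Fin m → ℝ) j c with hv
    have hsumv : ∑ k, v k = c := by
      rw [hv, Finset.sum_update_of_mem (mem_univ j)]
      simp
    have hsub : {x ∈ Tset m | c ≤ emb m x j.castSucc}
        ⊆ v +ᵥ ({y : Fin m → ℝ | (∀ i, 0 < y i) ∧ ∑ i, y i < 1 - c}
            ∪ {y : Fin m → ℝ | y j = 0}) := by
      rintro x ⟨⟨h1, h2⟩, h3⟩
      simp only [emb, Fin.snoc_castSucc] at h3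
      refine Set.mem_vadd_set.2 ⟨x - v, ?_, by simp⟩
      have hsumy : ∑ k, (x - v) k = (∑ k, x k) - c := by
        simp only [Pi.sub_apply]
        rw [Finset.sum_sub_distrib, hsumv]
      rcases eq_or_lt_of_le h3 with h | h
      · refine Or.inr ?_
        simp [hv, ← h]
      · refine Or.inl ⟨fun k => ?_, by rw [hsumy]; linarith⟩
        rcases eq_or_ne k j with rfl | hk
        · simp only [Pi.sub_apply, hv, Function.update_self]
          linarith
        · simp only [Pi.sub_apply, hv, Function.update_of_ne hk]
          simpa using h1 k
    calc volume {x ∈ Tset m | c ≤ emb m x j.castSucc}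
        ≤ volume (v +ᵥ ({y : Fin m → ℝ | (∀ i, 0 < y i) ∧ ∑ i, y i < 1 - c}
            ∪ {y : Fin m → ℝ | y j = 0})) := measure_mono hsub
      _ = volume ({y : Fin m → ℝ | (∀ i, 0 < y i) ∧ ∑ i, y i < 1 - c}
            ∪ {y : Fin m → ℝ | y j = 0}) := measure_vadd _ _ _
      _ ≤ volume {y : Fin m → ℝ | (∀ i, 0 < y i) ∧ ∑ i, y i < 1 - c}
            + volume {y : Fin m → ℝ | y j = 0} := measure_union_le _ _
      _ = ENNReal.ofReal ((1-c) ^ m) * volume (Tset m) := by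
          rw [vol_scale m (by linarith), null_coord m j, add_zero]

lemma one_le_I (m : ℕ) :
    1 ≤ ∫ ℓ, (⨆ i, ℓ i)⁻¹ ^ (m+1) ∂(simplexProb m) := by
  rw [integral_simplexProb m]
  have h := setIntegral_ge_of_const_le_real (meas_Tset m) (vol_Tset_lt_top m).ne
    (fun x hx => (g_bounds m hx).1) (g_integrableOn m)
  have hv : (volume (Tset m)).toReal = 1 / m.factorial := by
    rw [vol_Tset m, ENNReal.toReal_ofReal (by positivity)]
  rw [measureReal_def, hv] at h
  have hf : (0:ℝ) < m.factorial := by exact_mod_cast m.factorial_pos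
  calc (1:ℝ) = (m.factorial : ℝ) * (1 * (1 / m.factorial)) := by field_simp
    _ ≤ (m.factorial : ℝ) * ∫ x in Tset m, (⨆ i, emb m x i)⁻¹ ^ (m+1) := by
        apply mul_le_mul_of_nonneg_left h hf.le

lemma main_ineq (p : ℕ) (hp : 1 ≤ p) (m : ℕ) :
    (2*(p:ℝ))^(m+1) * (1 - (m+1) * ((2*(p:ℝ)-1)/(2*p))^m)
      ≤ ∫ ℓ, (⨆ i, ℓ i)⁻¹ ^ (m+1) ∂(simplexProb m) := by
  have hp1 : (1:ℝ) ≤ p := by exact_mod_cast hp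
  set c : ℝ := 1/(2*p) with hc
  have hc0 : 0 < c := by rw [hc]; positivity
  have hc1 : c < 1 := by rw [hc, div_lt_one (by positivity)]; linarith
  have hq : (2*(p:ℝ)-1)/(2*p) = 1 - c := by rw [hc]; field_simp
  set q : ℝ := 1 - c with hqdef
  have hq0 : 0 ≤ q := by rw [hqdef]; linarith
  -- the good set
  set G : Set (Fin m → ℝ) := Tset m \ ⋃ i, {x ∈ Tset m | c ≤ emb m x i} with hG
  have measA : ∀ i : Fin (m+1), MeasurableSet {x ∈ Tset m | c ≤ emb m x i} := by
    intro i
    exact (meas_Tset m).inter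
      (measurableSet_le measurable_const ((measurable_pi_apply i).comp (emb_meas m)))
  have measG : MeasurableSet G := (meas_Tset m).diff (MeasurableSet.iUnion measA)
  have hGsub : G ⊆ Tset m := Set.diff_subset
  have hGlt : volume G < ⊤ := lt_of_le_of_lt (measure_mono hGsub) (vol_Tset_lt_top m)
  -- measure bound
  have hcover : Tset m ⊆ G ∪ ⋃ i, {x ∈ Tset m | c ≤ emb m x i} := by
    intro x hx
    by_cases h : x ∈ ⋃ i, {x ∈ Tset m | c ≤ emb m x i}
    · exact Or.inr h
    · exact Or.inl ⟨hx, h⟩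
  have hAsum : volume (⋃ i, {x ∈ Tset m | c ≤ emb m x i})
      ≤ (m+1 : ℝ≥0∞) * (ENNReal.ofReal (q ^ m) * volume (Tset m)) := by
    calc volume (⋃ i, {x ∈ Tset m | c ≤ emb m x i})
        ≤ ∑ i : Fin (m+1), volume {x ∈ Tset m | c ≤ emb m x i} := measure_iUnion_fintype_le _ _
      _ ≤ ∑ _i : Fin (m+1), ENNReal.ofReal (q ^ m) * volume (Tset m) :=
          Finset.sum_le_sum fun i _ => volA_bound m hc0 hc1 i
      _ = (m+1 : ℝ≥0∞) * (ENNReal.ofReal (q ^ m) * volume (Tset m)) := by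
          rw [Finset.sum_const, card_univ, Fintype.card_fin, nsmul_eq_mul]
          push_cast
          ring
  have hmb : volume (Tset m) ≤ volume G + ENNReal.ofReal ((m+1) * q^m * (1/m.factorial)) := by
    calc volume (Tset m) ≤ volume (G ∪ ⋃ i, {x ∈ Tset m | c ≤ emb m x i}) := measure_mono hcover
      _ ≤ volume G + volume (⋃ i, {x ∈ Tset m | c ≤ emb m x i}) := measure_union_le _ _
      _ ≤ volume G + (m+1 : ℝ≥0∞) * (ENNReal.ofReal (q ^ m) * volume (Tset m)) :=
          add_le_add le_rfl hAsum
      _ = volume G + ENNReal.ofReal ((m+1) * q^m * (1/m.factorial)) := by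
          rw [vol_Tset m, ← ENNReal.ofReal_mul (by positivity),
            show ((m:ℝ≥0∞)+1) = ENNReal.ofReal ((m:ℝ)+1) by
              rw [ENNReal.ofReal_add (by positivity) (by norm_num)]; simp,
            ← ENNReal.ofReal_mul (by positivity)]
          ring_nf
  have hfac : (0:ℝ) < m.factorial := by exact_mod_cast m.factorial_pos
  have hreal : 1/(m.factorial:ℝ) ≤ (volume G).toReal + (m+1) * q^m * (1/m.factorial) := by
    have h1 := ENNReal.toReal_mono (by
        exact ENNReal.add_ne_top.2 ⟨hGlt.ne, ENNReal.ofReal_ne_top⟩) hmb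
    rw [vol_Tset m, ENNReal.toReal_ofReal (by positivity),
      ENNReal.toReal_add hGlt.ne ENNReal.ofReal_ne_top,
      ENNReal.toReal_ofReal (by positivity)] at h1
    exact h1
  -- integral bound
  have hpoint : ∀ x ∈ G, (2*(p:ℝ))^(m+1) ≤ (⨆ i, emb m x i)⁻¹ ^ (m+1) := by
    rintro x ⟨hxT, hxU⟩
    have hlt : ∀ i, emb m x i < c := by
      intro i
      by_contra h
      exact hxU (Set.mem_iUnion.2 ⟨i, hxT, le_of_not_gt h⟩)
    have hpos : ∀ i, 0 < emb m x i := by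
      have := (emb_preimage m).symm ▸ hxT
      exact ((Set.mem_preimage.1 this : emb m x ∈ Simplex m)).1
    have hsup0 : 0 < ⨆ i, emb m x i :=
      lt_of_lt_of_le (hpos 0) (le_ciSup (Set.Finite.bddAbove (Set.finite_range _)) 0)
    have hsupc : (⨆ i, emb m x i) ≤ c := ciSup_le fun i => (hlt i).le
    apply pow_le_pow_left₀ (by positivity)
    rw [le_inv_comm₀ (by positivity) hsup0]
    calc (⨆ i, emb m x i) ≤ 1/(2*p) := hsupc
      _ = (2*(p:ℝ))⁻¹ := one_div _
  have hint1 : (2*(p:ℝ))^(m+1) * (volume G).toReal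
      ≤ ∫ x in G, (⨆ i, emb m x i)⁻¹ ^ (m+1) :=
    setIntegral_ge_of_const_le_real measG hGlt.ne hpoint ((g_integrableOn m).mono_set hGsub)
  have hint2 : ∫ x in G, (⨆ i, emb m x i)⁻¹ ^ (m+1)
      ≤ ∫ x in Tset m, (⨆ i, emb m x i)⁻¹ ^ (m+1) := by
    apply setIntegral_mono_set (g_integrableOn m)
    · filter_upwards [self_mem_ae_restrict (meas_Tset m)] with x hx
      show (0:ℝ) ≤ (⨆ i, emb m x i)⁻¹ ^ (m+1)
      linarith [(g_bounds m hx).1]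
    · exact HasSubset.Subset.eventuallyLE hGsub
  rw [integral_simplexProb m, hq]
  have h2p : (0:ℝ) < (2*(p:ℝ))^(m+1) := by positivity
  calc (2*(p:ℝ))^(m+1) * (1 - (m+1) * q^m)
      = (m.factorial:ℝ) * ((2*(p:ℝ))^(m+1) * ((1/m.factorial) - (m+1) * q^m * (1/m.factorial))) := by
        field_simp
    _ ≤ (m.factorial:ℝ) * ((2*(p:ℝ))^(m+1) * (volume G).toReal) := by
        apply mul_le_mul_of_nonneg_left _ hfac.le
        apply mul_le_mul_of_nonneg_left _ h2p.le
        linarith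
    _ ≤ (m.factorial:ℝ) * ∫ x in Tset m, (⨆ i, emb m x i)⁻¹ ^ (m+1) := by
        apply mul_le_mul_of_nonneg_left (le_trans hint1 hint2) hfac.le


/-- with k_n⁻¹ = ∫ |ℓ|^{-n} dμ_n (n = m+1), for every p ≥ 1 one has
k_n⁻¹ ≥ (2p)^n·(1 - n·((2p-1)/(2p))^{n-1}), and consequently the sequence
(2p)^n·k_n is bounded as n → ∞. -/
theorem stmt14 (p : ℕ) (hp : 1 ≤ p) :
    (∀ m : ℕ, (2*(p:ℝ))^(m+1) * (1 - (m+1) * ((2*(p:ℝ)-1)/(2*p))^m)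
        ≤ ∫ ℓ, (⨆ i, ℓ i)⁻¹ ^ (m+1) ∂(simplexProb m))
    ∧ ∃ C : ℝ, ∀ m : ℕ,
        (2*(p:ℝ))^(m+1) * (∫ ℓ, (⨆ i, ℓ i)⁻¹ ^ (m+1) ∂(simplexProb m))⁻¹ ≤ C := by
  have hp1 : (1:ℝ) ≤ p := by exact_mod_cast hp
  refine ⟨main_ineq p hp, ?_⟩
  set q : ℝ := (2*(p:ℝ)-1)/(2*p) with hqdef
  have h2p0 : (0:ℝ) < 2*p := by linarith
  have hq0 : 0 < q := by rw [hqdef]; apply div_pos <;> linarith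
  have hq1 : q < 1 := by
    rw [hqdef, div_lt_one h2p0]; linarith
  -- (m+1) * q^m → 0
  have htend : Tendsto (fun m : ℕ => ((m:ℝ)+1) * q^m) atTop (nhds 0) := by
    have h1 := tendsto_self_mul_const_pow_of_lt_one hq0.le hq1
    have h2 : Tendsto (fun m : ℕ => ((m+1 : ℕ):ℝ) * q^(m+1)) atTop (nhds 0) :=
      h1.comp (tendsto_add_atTop_nat 1)
    have h3 := h2.const_mul q⁻¹
    rw [mul_zero] at h3
    convert h3 using 2 with m
    push_cast
    rw [pow_succ]
    field_simp
  have hev : ∀ᶠ m : ℕ in atTop, ((m:ℝ)+1) * q^m ≤ 1/2 := by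
    have := htend.eventually (eventually_le_nhds (by norm_num : (0:ℝ) < 1/2))
    exact this
  obtain ⟨N, hN⟩ := eventually_atTop.1 hev
  refine ⟨max ((2*(p:ℝ))^N) 2, fun m => ?_⟩
  have hI1 : (1:ℝ) ≤ ∫ ℓ, (⨆ i, ℓ i)⁻¹ ^ (m+1) ∂(simplexProb m) := one_le_I m
  have hI0 : (0:ℝ) < ∫ ℓ, (⨆ i, ℓ i)⁻¹ ^ (m+1) ∂(simplexProb m) := lt_of_lt_of_le one_pos hI1
  rcases le_or_gt N m with hm | hm
  · -- tail: integral ≥ (2p)^(m+1)/2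
    have hkey := main_ineq p hp m
    rw [← hqdef] at hkey
    have hq2 : 1 - ((m:ℝ)+1) * q^m ≥ 1/2 := by
      have := hN m hm
      linarith
    have hIg : (2*(p:ℝ))^(m+1) * (1/2) ≤ ∫ ℓ, (⨆ i, ℓ i)⁻¹ ^ (m+1) ∂(simplexProb m) := by
      refine le_trans ?_ hkey
      apply mul_le_mul_of_nonneg_left (by linarith) (by positivity)
    refine le_trans ?_ (le_max_right _ _)
    rw [mul_inv_le_iff₀ hI0]
    calc (2*(p:ℝ))^(m+1) = 2 * ((2*(p:ℝ))^(m+1) * (1/2)) := by ring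
      _ ≤ 2 * ∫ ℓ, (⨆ i, ℓ i)⁻¹ ^ (m+1) ∂(simplexProb m) := by
          apply mul_le_mul_of_nonneg_left hIg (by norm_num)
  · refine le_trans ?_ (le_max_left _ _)
    have h1 : (∫ ℓ, (⨆ i, ℓ i)⁻¹ ^ (m+1) ∂(simplexProb m))⁻¹ ≤ 1 := by
      rw [inv_le_one_iff₀]; right; exact hI1
    calc (2*(p:ℝ))^(m+1) * (∫ ℓ, (⨆ i, ℓ i)⁻¹ ^ (m+1) ∂(simplexProb m))⁻¹
        ≤ (2*(p:ℝ))^(m+1) * 1 := by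
          apply mul_le_mul_of_nonneg_left h1 (by positivity)
      _ = (2*(p:ℝ))^(m+1) := mul_one _
      _ ≤ (2*(p:ℝ))^N := by
          apply pow_le_pow_right₀ (by linarith) (by omega)
end
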